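/- arXiv:2405.11291 — 3 statements merged into one kernel-verified Lean document; each statement's English description precedes it below -/
import Mathlib

section
/- For every r > 0 one has the identity (in [0,∞]) τ̄(r) = r^{-α/d} ∫_{(0, r t^{d/α}]} z^{α/d} λ(dz) + t·λ̄(r t^{d/α}). Consequently, τ̄(r) < ∞ for every r > 0 if and only if ∫_{(0,1]} z^{α/d} λ(dz) < ∞. -/
open MeasureTheory Set Filter Topology
open scoped ENNReal NNReal

/-- `tauBar d α t lam r = τ̄(r)`, where
`τ(B) = (Leb ⊗ λ)({(s,z) ∈ (0,t] × (0,∞) : z·s^{-d/α} ∈ B})` and `τ̄(r) = τ((r,∞))`. -/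
noncomputable def tauBar (d : ℕ) (α t : ℝ) (lam : MeasureTheory.Measure ℝ) (r : ℝ) : ℝ≥0∞ :=
  ((MeasureTheory.volume.restrict (Set.Ioc (0:ℝ) t)).prod (lam.restrict (Set.Ioi (0:ℝ))))
    {p : ℝ × ℝ | r < p.2 * p.1 ^ (-((d : ℝ) / α))}

theorem stmt0 (d : ℕ) (hd : 1 ≤ d) (α : ℝ) (hα : α ∈ Set.Ioo (0:ℝ) 2) (t : ℝ) (ht : 0 < t)
    (lam : MeasureTheory.Measure ℝ) [SigmaFinite lam]
    (hlam0 : lam (Set.Iic 0) = 0) (hlam_ne : lam ≠ 0)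
    (hmom : ∫⁻ z in Set.Ioi (0:ℝ), ENNReal.ofReal (min 1 (z ^ 2)) ∂lam ≠ ⊤) :
    (∀ r : ℝ, 0 < r →
      tauBar d α t lam r
        = ENNReal.ofReal (r ^ (-(α / (d:ℝ)))) *
            ∫⁻ z in Set.Ioc (0:ℝ) (r * t ^ ((d:ℝ) / α)),
              ENNReal.ofReal (z ^ (α / (d:ℝ))) ∂lam
          + ENNReal.ofReal t * lam (Set.Ioi (r * t ^ ((d:ℝ) / α)))) ∧
    ((∀ r : ℝ, 0 < r → tauBar d α t lam r < ⊤) ↔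
      ∫⁻ z in Set.Ioc (0:ℝ) 1, ENNReal.ofReal (z ^ (α / (d:ℝ))) ∂lam < ⊤) := by
  have hα0 : 0 < α := hα.1
  have hdR : (0:ℝ) < (d:ℝ) := by exact_mod_cast Nat.lt_of_lt_of_le Nat.zero_lt_one hd
  set p : ℝ := (d:ℝ)/α with hpdef
  set β : ℝ := α/(d:ℝ) with hβdef
  have hp : 0 < p := div_pos hdR hα0
  have hβpos : 0 < β := div_pos hα0 hdR
  have hpβ : p * β = 1 := by
    rw [hpdef, hβdef, div_mul_div_comm, div_eq_one_iff_eq (by positivity)]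
    ring
  have hβp : β = p⁻¹ := by rw [hβdef, hpdef, inv_div]
  -- tails of lam are finite
  have htail : ∀ c : ℝ, 0 < c → lam (Set.Ioi c) < ⊤ := by
    intro c hc
    have hcm : (0:ℝ) < min 1 (c^2) := lt_min one_pos (by positivity)
    have h1 : ENNReal.ofReal (min 1 (c^2)) * lam (Set.Ioi c)
        = ∫⁻ _ in Set.Ioi c, ENNReal.ofReal (min 1 (c^2)) ∂lam := by
      rw [setLIntegral_const]
    have h2 : ∫⁻ _ in Set.Ioi c, ENNReal.ofReal (min 1 (c^2)) ∂lam
        ≤ ∫⁻ z in Set.Ioi c, ENNReal.ofReal (min 1 (z^2)) ∂lam := by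
      apply setLIntegral_mono' measurableSet_Ioi
      intro z hz
      exact ENNReal.ofReal_le_ofReal
        (min_le_min le_rfl (pow_le_pow_left₀ hc.le (le_of_lt hz) 2))
    have h3 : ∫⁻ z in Set.Ioi c, ENNReal.ofReal (min 1 (z^2)) ∂lam
        ≤ ∫⁻ z in Set.Ioi (0:ℝ), ENNReal.ofReal (min 1 (z^2)) ∂lam :=
      lintegral_mono_set (Set.Ioi_subset_Ioi hc.le)
    have hne : ENNReal.ofReal (min 1 (c^2)) * lam (Set.Ioi c) ≠ ⊤ := by
      rw [h1]; exact ne_top_of_le_ne_top hmom (h2.trans h3)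
    exact ENNReal.lt_top_of_mul_ne_top_right hne (ENNReal.ofReal_pos.mpr hcm).ne'
  -- main formula
  have key : ∀ r : ℝ, 0 < r →
      tauBar d α t lam r
        = ENNReal.ofReal (r ^ (-β)) *
            ∫⁻ z in Set.Ioc (0:ℝ) (r * t ^ p), ENNReal.ofReal (z ^ β) ∂lam
          + ENNReal.ofReal t * lam (Set.Ioi (r * t ^ p)) := by
    intro r hr
    set R := r * t ^ p with hRdef
    have hR : 0 < R := mul_pos hr (Real.rpow_pos_of_pos ht p)
    have hSm : MeasurableSet {q : ℝ × ℝ | r < q.2 * q.1 ^ (-p)} := by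
      apply measurableSet_lt measurable_const
      fun_prop
    have htb : tauBar d α t lam r
        = ((volume.restrict (Set.Ioc (0:ℝ) t)).prod (lam.restrict (Set.Ioi (0:ℝ))))
            {q : ℝ × ℝ | r < q.2 * q.1 ^ (-p)} := rfl
    rw [htb, Measure.prod_apply_symm hSm]
    have hinner : ∀ z ∈ Set.Ioi (0:ℝ),
        (volume.restrict (Set.Ioc (0:ℝ) t))
            ((fun x => (x, z)) ⁻¹' {q : ℝ × ℝ | r < q.2 * q.1 ^ (-p)})
          = ENNReal.ofReal (min t ((z/r) ^ β)) := by
      intro z hz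
      have hz0 : (0:ℝ) < z := hz
      set y := (z/r) ^ β with hydef
      have hy : 0 < y := Real.rpow_pos_of_pos (div_pos hz0 hr) β
      have hpre : (fun x => (x, z)) ⁻¹' {q : ℝ × ℝ | r < q.2 * q.1 ^ (-p)}
          = {s : ℝ | r < z * s ^ (-p)} := rfl
      rw [hpre, Measure.restrict_apply (measurableSet_lt measurable_const (by fun_prop))]
      have hiff : ∀ s : ℝ, 0 < s → (r < z * s ^ (-p) ↔ s < y) := by
        intro s hs
        have e1 : z * s ^ (-p) = z / s ^ p := by
          rw [Real.rpow_neg hs.le, div_eq_mul_inv]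
        rw [e1, lt_div_iff₀ (Real.rpow_pos_of_pos hs p), hydef, hβp,
          Real.lt_rpow_inv_iff_of_pos hs.le (div_nonneg hz0.le hr.le) hp,
          lt_div_iff₀ hr, mul_comm r (s ^ p)]
      have hseteq : {s : ℝ | r < z * s ^ (-p)} ∩ Set.Ioc 0 t
          = Set.Ioc 0 t ∩ Set.Iio y := by
        ext s
        simp only [Set.mem_inter_iff, Set.mem_setOf_eq, Set.mem_Ioc, Set.mem_Iio]
        constructor
        · rintro ⟨h1, h2⟩; exact ⟨h2, (hiff s h2.1).1 h1⟩
        · rintro ⟨h2, h3⟩; exact ⟨(hiff s h2.1).2 h3, h2⟩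
      rw [hseteq]
      have hsub1 : Set.Ioo 0 (min t y) ⊆ Set.Ioc 0 t ∩ Set.Iio y := by
        intro s hs
        exact ⟨⟨hs.1, le_of_lt (lt_of_lt_of_le hs.2 (min_le_left _ _))⟩,
          lt_of_lt_of_le hs.2 (min_le_right _ _)⟩
      have hsub2 : Set.Ioc 0 t ∩ Set.Iio y ⊆ Set.Ioc 0 (min t y) :=
        fun s hs => ⟨hs.1.1, le_min hs.1.2 hs.2.le⟩
      apply le_antisymm
      · calc volume (Set.Ioc 0 t ∩ Set.Iio y) ≤ volume (Set.Ioc 0 (min t y)) :=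
              measure_mono hsub2
          _ = ENNReal.ofReal (min t y) := by rw [Real.volume_Ioc, sub_zero]
      · calc ENNReal.ofReal (min t y) = volume (Set.Ioo 0 (min t y)) := by
              rw [Real.volume_Ioo, sub_zero]
          _ ≤ volume (Set.Ioc 0 t ∩ Set.Iio y) := measure_mono hsub1
    have hmin1 : ∀ z ∈ Set.Ioc (0:ℝ) R,
        ENNReal.ofReal (min t ((z/r) ^ β))
          = ENNReal.ofReal (r ^ (-β)) * ENNReal.ofReal (z ^ β) := by
      intro z hz
      have hz0 : 0 < z := hz.1
      have hzr : z / r ≤ t ^ p := by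
        rw [div_le_iff₀ hr]
        calc z ≤ R := hz.2
          _ = t ^ p * r := by rw [hRdef]; ring
      have h1 : (z/r) ^ β ≤ t := by
        calc (z/r) ^ β ≤ (t ^ p) ^ β :=
              Real.rpow_le_rpow (div_nonneg hz0.le hr.le) hzr hβpos.le
          _ = t := by rw [← Real.rpow_mul ht.le, hpβ, Real.rpow_one]
      rw [min_eq_right h1, Real.div_rpow hz0.le hr.le, div_eq_mul_inv,
        ← Real.rpow_neg hr.le, mul_comm,
        ENNReal.ofReal_mul (Real.rpow_nonneg hr.le _)]
    have hmin2 : ∀ z ∈ Set.Ioi R,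
        ENNReal.ofReal (min t ((z/r) ^ β)) = ENNReal.ofReal t := by
      intro z hz
      have hz0 : (0:ℝ) < z := lt_trans hR hz
      have h1 : t ^ p ≤ z / r := by
        rw [le_div_iff₀ hr]
        calc t ^ p * r = R := by rw [hRdef]; ring
          _ ≤ z := le_of_lt hz
      have h2 : t ≤ (z/r) ^ β := by
        calc t = (t ^ p) ^ β := by rw [← Real.rpow_mul ht.le, hpβ, Real.rpow_one]
          _ ≤ (z/r) ^ β := Real.rpow_le_rpow (Real.rpow_nonneg ht.le p) h1 hβpos.le
      rw [min_eq_left h2]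
    calc (∫⁻ z in Set.Ioi (0:ℝ),
            (volume.restrict (Set.Ioc (0:ℝ) t))
              ((fun x => (x, z)) ⁻¹' {q : ℝ × ℝ | r < q.2 * q.1 ^ (-p)}) ∂lam)
        = ∫⁻ z in Set.Ioi (0:ℝ), ENNReal.ofReal (min t ((z/r) ^ β)) ∂lam :=
          setLIntegral_congr_fun measurableSet_Ioi hinner
      _ = (∫⁻ z in Set.Ioc (0:ℝ) R, ENNReal.ofReal (min t ((z/r) ^ β)) ∂lam)
            + ∫⁻ z in Set.Ioi R, ENNReal.ofReal (min t ((z/r) ^ β)) ∂lam := by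
          rw [← lintegral_union measurableSet_Ioi Set.Ioc_disjoint_Ioi_same,
            Set.Ioc_union_Ioi_eq_Ioi hR.le]
      _ = ENNReal.ofReal (r ^ (-β)) *
            (∫⁻ z in Set.Ioc (0:ℝ) R, ENNReal.ofReal (z ^ β) ∂lam)
            + ENNReal.ofReal t * lam (Set.Ioi R) := by
          rw [setLIntegral_congr_fun measurableSet_Ioc hmin1,
            setLIntegral_congr_fun measurableSet_Ioi hmin2,
            lintegral_const_mul _ (by fun_prop), setLIntegral_const]
  refine ⟨key, ?_, ?_⟩
  · intro h
    have hr0 : 0 < t ^ (-p) := Real.rpow_pos_of_pos ht _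
    have hfin := h _ hr0
    rw [key _ hr0] at hfin
    have hR1 : t ^ (-p) * t ^ p = 1 := by
      rw [← Real.rpow_add ht]; simp
    rw [hR1] at hfin
    have h1 : ENNReal.ofReal ((t ^ (-p)) ^ (-β)) *
        ∫⁻ z in Set.Ioc (0:ℝ) 1, ENNReal.ofReal (z ^ β) ∂lam < ⊤ :=
      lt_of_le_of_lt le_self_add hfin
    have hne : ENNReal.ofReal ((t ^ (-p)) ^ (-β)) ≠ 0 :=
      (ENNReal.ofReal_pos.mpr (Real.rpow_pos_of_pos hr0 _)).ne'
    exact ENNReal.lt_top_of_mul_ne_top_right h1.ne hne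
  · intro hI r hr
    rw [key r hr]
    set R := r * t ^ p with hRdef
    have hR : 0 < R := mul_pos hr (Real.rpow_pos_of_pos ht p)
    have hIR : ∫⁻ z in Set.Ioc (0:ℝ) R, ENNReal.ofReal (z ^ β) ∂lam < ⊤ := by
      rcases le_total R 1 with hcase | hcase
      · exact lt_of_le_of_lt (lintegral_mono_set (Set.Ioc_subset_Ioc_right hcase)) hI
      · have hsplit : ∫⁻ z in Set.Ioc (0:ℝ) R, ENNReal.ofReal (z ^ β) ∂lam
            = (∫⁻ z in Set.Ioc (0:ℝ) 1, ENNReal.ofReal (z ^ β) ∂lam)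
              + ∫⁻ z in Set.Ioc (1:ℝ) R, ENNReal.ofReal (z ^ β) ∂lam := by
          rw [← lintegral_union measurableSet_Ioc (Set.Ioc_disjoint_Ioc_of_le le_rfl),
            Set.Ioc_union_Ioc_eq_Ioc zero_le_one hcase]
        rw [hsplit]
        refine ENNReal.add_lt_top.2 ⟨hI, ?_⟩
        have hb : ∫⁻ z in Set.Ioc (1:ℝ) R, ENNReal.ofReal (z ^ β) ∂lam
            ≤ ENNReal.ofReal (R ^ β) * lam (Set.Ioc 1 R) := by
          rw [← setLIntegral_const]
          apply setLIntegral_mono' measurableSet_Ioc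
          intro z hz
          exact ENNReal.ofReal_le_ofReal
            (Real.rpow_le_rpow (le_trans zero_le_one hz.1.le) hz.2 hβpos.le)
        refine lt_of_le_of_lt hb (ENNReal.mul_lt_top ENNReal.ofReal_lt_top ?_)
        exact lt_of_le_of_lt
          (measure_mono (fun z hz => hz.1 : Set.Ioc (1:ℝ) R ⊆ Set.Ioi 1)) (htail 1 one_pos)
    exact ENNReal.add_lt_top.2
      ⟨ENNReal.mul_lt_top ENNReal.ofReal_lt_top hIR,
        ENNReal.mul_lt_top ENNReal.ofReal_lt_top (htail R hR)⟩
end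

section
/- Assume ∫_{(0,1]} z^{α/d} λ(dz) < ∞. Then the function r ↦ τ̄(r) is continuous and nonincreasing on (0,∞), satisfies liminf_{r→∞} r^{α/d} τ̄(r) > 0, and is of extended regular variation at infinity. -/
open MeasureTheory Set Filter Topology
open scoped ENNReal NNReal

lemma aux_iff {d : ℕ} {α : ℝ} (hα : 0 < α) (hd : 0 < (d:ℝ)) {r s z : ℝ}
    (hr : 0 < r) (hs : 0 < s) (hz : 0 < z) :
    r < z * s ^ (-((d : ℝ) / α)) ↔ s < (z / r) ^ (α / (d : ℝ)) := by
  have hc : 0 < (d:ℝ)/α := div_pos hd hα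
  have h1 : (0:ℝ) < s ^ ((d:ℝ)/α) := Real.rpow_pos_of_pos hs _
  rw [Real.rpow_neg hs.le, mul_comm, ← div_eq_inv_mul, lt_div_iff₀ h1,
    show α / (d:ℝ) = ((d:ℝ)/α)⁻¹ by rw [inv_div],
    Real.lt_rpow_inv_iff_of_pos hs.le (div_nonneg hz.le hr.le) hc,
    lt_div_iff₀ hr, mul_comm]

lemma tauBar_eq {d : ℕ} {α t : ℝ} (hα : 0 < α) (hd : 0 < (d:ℝ)) (ht : 0 < t)
    (lam : MeasureTheory.Measure ℝ) [SigmaFinite lam] {r : ℝ} (hr : 0 < r) :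
    tauBar d α t lam r
      = ∫⁻ z in Set.Ioi (0:ℝ), ENNReal.ofReal (min t ((z / r) ^ (α / (d:ℝ)))) ∂lam := by
  have hmeas : MeasurableSet {p : ℝ × ℝ | r < p.2 * p.1 ^ (-((d : ℝ) / α))} :=
    measurableSet_lt measurable_const (by fun_prop)
  rw [tauBar, Measure.prod_apply_symm hmeas]
  refine setLIntegral_congr_fun measurableSet_Ioi ?_
  intro z hz
  beta_reduce
  have hz' : 0 < z := hz
  set m : ℝ := (z / r) ^ (α / (d:ℝ)) with hm
  have hm0 : 0 ≤ m := Real.rpow_nonneg (div_nonneg hz'.le hr.le) _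
  have hset : (fun x => (x, z)) ⁻¹' {p : ℝ × ℝ | r < p.2 * p.1 ^ (-((d : ℝ) / α))}
      ∩ Set.Ioc 0 t = Set.Ioc 0 t ∩ Set.Iio m := by
    ext s
    simp only [mem_preimage, mem_setOf_eq, mem_inter_iff, mem_Ioc, mem_Iio]
    constructor
    · rintro ⟨hcond, hs0, hst⟩
      exact ⟨⟨hs0, hst⟩, (aux_iff hα hd hr hs0 hz').mp hcond⟩
    · rintro ⟨⟨hs0, hst⟩, hsm⟩
      exact ⟨(aux_iff hα hd hr hs0 hz').mpr hsm, hs0, hst⟩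
  rw [Measure.restrict_apply
      (measurable_prodMk_right (measurableSet_lt measurable_const
        (show Measurable fun p : ℝ × ℝ => p.2 * p.1 ^ (-((d:ℝ)/α)) by fun_prop))), hset]
  rcases le_or_gt m t with h | h
  · have : Set.Ioc 0 t ∩ Set.Iio m = Set.Ioo 0 m := by
      ext s; simp only [mem_inter_iff, mem_Ioc, mem_Iio, mem_Ioo]
      constructor
      · rintro ⟨⟨h1, _⟩, h3⟩; exact ⟨h1, h3⟩
      · rintro ⟨h1, h3⟩; exact ⟨⟨h1, (le_of_lt h3).trans h⟩, h3⟩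
    rw [this, Real.volume_Ioo, min_eq_right h]; simp
  · have : Set.Ioc 0 t ∩ Set.Iio m = Set.Ioc 0 t := by
      refine inter_eq_left.mpr fun s hs => lt_of_le_of_lt hs.2 h
    rw [this, Real.volume_Ioc, min_eq_left h.le]; simp

lemma lam_Ioi_one (lam : MeasureTheory.Measure ℝ)
    (hmom : ∫⁻ z in Set.Ioi (0:ℝ), ENNReal.ofReal (min 1 (z ^ 2)) ∂lam ≠ ⊤) :
    lam (Set.Ioi 1) ≠ ⊤ := by
  have h1 : lam (Set.Ioi 1) = ∫⁻ _ in Set.Ioi (1:ℝ), 1 ∂lam := (setLIntegral_one _).symm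
  have h2 : ∫⁻ _ in Set.Ioi (1:ℝ), (1:ℝ≥0∞) ∂lam
      = ∫⁻ z in Set.Ioi (1:ℝ), ENNReal.ofReal (min 1 (z ^ 2)) ∂lam := by
    refine setLIntegral_congr_fun measurableSet_Ioi ?_
    intro z hz
    beta_reduce
    have : (1:ℝ) ≤ z ^ 2 := by nlinarith [le_of_lt (show (1:ℝ) < z from hz)]
    rw [min_eq_left this, ENNReal.ofReal_one]
  have h3 : ∫⁻ z in Set.Ioi (1:ℝ), ENNReal.ofReal (min 1 (z ^ 2)) ∂lam
      ≤ ∫⁻ z in Set.Ioi (0:ℝ), ENNReal.ofReal (min 1 (z ^ 2)) ∂lam :=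
    lintegral_mono_set (Set.Ioi_subset_Ioi zero_le_one)
  exact ne_top_of_le_ne_top hmom (h1 ▸ h2 ▸ h3)

lemma exists_eps (lam : MeasureTheory.Measure ℝ)
    (hlam0 : lam (Set.Iic 0) = 0) (hlam_ne : lam ≠ 0) :
    ∃ ε : ℝ, 0 < ε ∧ 0 < lam (Set.Ioi ε) := by
  by_contra h
  push_neg at h
  have hz : ∀ n : ℕ, lam (Set.Ioi (1 / ((n:ℝ) + 1))) = 0 := fun n =>
    le_antisymm (h _ (by positivity)) zero_le
  have hU : Set.Ioi (0:ℝ) = ⋃ n : ℕ, Set.Ioi (1 / ((n:ℝ) + 1)) := by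
    ext x
    simp only [mem_Ioi, mem_iUnion]
    constructor
    · intro hx
      obtain ⟨n, hn⟩ := exists_nat_one_div_lt hx
      exact ⟨n, hn⟩
    · rintro ⟨n, hn⟩
      exact lt_trans (by positivity) hn
  have h0 : lam (Set.Ioi (0:ℝ)) = 0 := by
    rw [hU]
    have hle := measure_iUnion_le (μ := lam) (fun n : ℕ => Set.Ioi (1 / ((n:ℝ) + 1)))
    refine le_antisymm (hle.trans ?_) zero_le
    rw [ENNReal.tsum_eq_zero.mpr hz]
  apply hlam_ne
  have : lam Set.univ = 0 := by
    have : (Set.univ : Set ℝ) = Set.Iic 0 ∪ Set.Ioi 0 := (Set.Iic_union_Ioi).symm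
    rw [this]
    exact le_antisymm (le_trans (measure_union_le _ _) (by simp [hlam0, h0])) zero_le
  exact Measure.measure_univ_eq_zero.mp this

lemma tauBar_lower {d : ℕ} {α t : ℝ} (hα : 0 < α) (hd : 0 < (d:ℝ)) (ht : 0 < t)
    (lam : MeasureTheory.Measure ℝ) [SigmaFinite lam] {ε r : ℝ} (hε : 0 < ε) (hr : 0 < r) :
    ENNReal.ofReal (min t ((ε / r) ^ (α / (d:ℝ)))) * lam (Set.Ioi ε) ≤ tauBar d α t lam r := by
  rw [tauBar_eq hα hd ht lam hr]
  calc ENNReal.ofReal (min t ((ε / r) ^ (α / (d:ℝ)))) * lam (Set.Ioi ε)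
      = ∫⁻ _ in Set.Ioi ε, ENNReal.ofReal (min t ((ε / r) ^ (α / (d:ℝ)))) ∂lam := by
        rw [setLIntegral_const]
    _ ≤ ∫⁻ z in Set.Ioi ε, ENNReal.ofReal (min t ((z / r) ^ (α / (d:ℝ)))) ∂lam := by
        refine setLIntegral_mono (by fun_prop) fun z hz => ?_
        refine ENNReal.ofReal_le_ofReal (min_le_min le_rfl ?_)
        have hz' : ε ≤ z := le_of_lt hz
        gcongr <;> positivity
    _ ≤ ∫⁻ z in Set.Ioi (0:ℝ), ENNReal.ofReal (min t ((z / r) ^ (α / (d:ℝ)))) ∂lam :=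
        lintegral_mono_set (Set.Ioi_subset_Ioi hε.le)

lemma tauBar_pos {d : ℕ} {α t : ℝ} (hα : 0 < α) (hd : 0 < (d:ℝ)) (ht : 0 < t)
    (lam : MeasureTheory.Measure ℝ) [SigmaFinite lam]
    (hlam0 : lam (Set.Iic 0) = 0) (hlam_ne : lam ≠ 0) {r : ℝ} (hr : 0 < r) :
    0 < tauBar d α t lam r := by
  obtain ⟨ε, hε, hεpos⟩ := exists_eps lam hlam0 hlam_ne
  refine lt_of_lt_of_le ?_ (tauBar_lower hα hd ht lam hε hr)
  refine ENNReal.mul_pos ?_ hεpos.ne'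
  refine (ENNReal.ofReal_pos.mpr ?_).ne'
  exact lt_min ht (Real.rpow_pos_of_pos (div_pos hε hr) _)

lemma tauBar_fin {d : ℕ} {α t : ℝ} (hα : 0 < α) (hd : 0 < (d:ℝ)) (ht : 0 < t)
    (lam : MeasureTheory.Measure ℝ) [SigmaFinite lam]
    (hmom : ∫⁻ z in Set.Ioi (0:ℝ), ENNReal.ofReal (min 1 (z ^ 2)) ∂lam ≠ ⊤)
    (hsmall : ∫⁻ z in Set.Ioc (0:ℝ) 1, ENNReal.ofReal (z ^ (α / (d:ℝ))) ∂lam ≠ ⊤)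
    {r : ℝ} (hr : 0 < r) :
    tauBar d α t lam r ≠ ⊤ := by
  rw [tauBar_eq hα hd ht lam hr]
  have hsplit : Set.Ioi (0:ℝ) = Set.Ioc 0 1 ∪ Set.Ioi 1 :=
    (Set.Ioc_union_Ioi_eq_Ioi zero_le_one).symm
  rw [hsplit]
  refine ne_top_of_le_ne_top ?_ (lintegral_union_le _ _ _)
  have h1 : ∫⁻ z in Set.Ioc (0:ℝ) 1, ENNReal.ofReal (min t ((z / r) ^ (α / (d:ℝ)))) ∂lam
      ≠ ⊤ := by
    have hb : ∫⁻ z in Set.Ioc (0:ℝ) 1, ENNReal.ofReal (min t ((z / r) ^ (α / (d:ℝ)))) ∂lam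
        ≤ ∫⁻ z in Set.Ioc (0:ℝ) 1,
            ENNReal.ofReal ((r ^ (α / (d:ℝ)))⁻¹) * ENNReal.ofReal (z ^ (α / (d:ℝ))) ∂lam := by
      refine setLIntegral_mono (by fun_prop) fun z hz => ?_
      rw [← ENNReal.ofReal_mul (by positivity)]
      refine ENNReal.ofReal_le_ofReal ((min_le_right _ _).trans (le_of_eq ?_))
      rw [Real.div_rpow hz.1.le hr.le, div_eq_inv_mul]
    rw [lintegral_const_mul' _ _ ENNReal.ofReal_ne_top] at hb
    exact ne_top_of_le_ne_top (ENNReal.mul_ne_top ENNReal.ofReal_ne_top hsmall) hb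
  have h2 : ∫⁻ z in Set.Ioi (1:ℝ), ENNReal.ofReal (min t ((z / r) ^ (α / (d:ℝ)))) ∂lam
      ≠ ⊤ := by
    have hb : ∫⁻ z in Set.Ioi (1:ℝ), ENNReal.ofReal (min t ((z / r) ^ (α / (d:ℝ)))) ∂lam
        ≤ ∫⁻ _ in Set.Ioi (1:ℝ), ENNReal.ofReal t ∂lam :=
      setLIntegral_mono (by fun_prop) fun z _ =>
        ENNReal.ofReal_le_ofReal (min_le_left _ _)
    rw [setLIntegral_const] at hb
    exact ne_top_of_le_ne_top
      (ENNReal.mul_ne_top ENNReal.ofReal_ne_top (lam_Ioi_one lam hmom)) hb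
  exact ENNReal.add_ne_top.mpr ⟨h1, h2⟩

lemma tauBar_anti {d : ℕ} (α t : ℝ) (lam : MeasureTheory.Measure ℝ) [SigmaFinite lam]
    {r r' : ℝ} (h : r ≤ r') : tauBar d α t lam r' ≤ tauBar d α t lam r :=
  measure_mono fun p hp => lt_of_le_of_lt h hp

lemma tauBar_scale {d : ℕ} {α t : ℝ} (hα : 0 < α) (hd : 0 < (d:ℝ)) (ht : 0 < t)
    (lam : MeasureTheory.Measure ℝ) [SigmaFinite lam]
    {c s : ℝ} (hc : 1 ≤ c) (hs : 0 < s) :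
    ENNReal.ofReal (c ^ (-(α / (d:ℝ)))) * tauBar d α t lam s ≤ tauBar d α t lam (c * s) := by
  have hc0 : 0 < c := lt_of_lt_of_le one_pos hc
  have hq : 0 < α / (d:ℝ) := div_pos hα hd
  rw [tauBar_eq hα hd ht lam hs, tauBar_eq hα hd ht lam (mul_pos hc0 hs)]
  rw [← lintegral_const_mul' _ _ ENNReal.ofReal_ne_top]
  refine setLIntegral_mono (by fun_prop) fun z hz => ?_
  have hz' : (0:ℝ) < z := hz
  rw [← ENNReal.ofReal_mul (by positivity)]
  refine ENNReal.ofReal_le_ofReal ?_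
  have hcq1 : c ^ (-(α / (d:ℝ))) ≤ 1 :=
    Real.rpow_le_one_of_one_le_of_nonpos hc (neg_nonpos.mpr hq.le)
  have key : z / (c * s) = (z / s) * c⁻¹ := by rw [mul_comm, ← div_div, div_eq_mul_inv]
  have h2 : (z / (c * s)) ^ (α / (d:ℝ)) = (z / s) ^ (α / (d:ℝ)) * c ^ (-(α / (d:ℝ))) := by
    rw [key, Real.mul_rpow (by positivity) (by positivity),
      Real.inv_rpow hc0.le, ← Real.rpow_neg hc0.le]
  rw [h2]
  refine le_min ?_ ?_
  · calc c ^ (-(α / (d:ℝ))) * min t ((z / s) ^ (α / (d:ℝ)))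
        ≤ 1 * t := mul_le_mul hcq1 (min_le_left _ _) (by positivity) zero_le_one
      _ = t := one_mul t
  · calc c ^ (-(α / (d:ℝ))) * min t ((z / s) ^ (α / (d:ℝ)))
        ≤ c ^ (-(α / (d:ℝ))) * (z / s) ^ (α / (d:ℝ)) :=
          mul_le_mul_of_nonneg_left (min_le_right _ _) (by positivity)
      _ = (z / s) ^ (α / (d:ℝ)) * c ^ (-(α / (d:ℝ))) := mul_comm _ _

lemma tauBar_tendsto {d : ℕ} {α t : ℝ} (hα : 0 < α) (hd : 0 < (d:ℝ)) (ht : 0 < t)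
    (lam : MeasureTheory.Measure ℝ) [SigmaFinite lam]
    (hmom : ∫⁻ z in Set.Ioi (0:ℝ), ENNReal.ofReal (min 1 (z ^ 2)) ∂lam ≠ ⊤)
    (hsmall : ∫⁻ z in Set.Ioc (0:ℝ) 1, ENNReal.ofReal (z ^ (α / (d:ℝ))) ∂lam ≠ ⊤)
    {r₀ : ℝ} (hr₀ : 0 < r₀) :
    Filter.Tendsto (fun r => tauBar d α t lam r) (𝓝 r₀) (𝓝 (tauBar d α t lam r₀)) := by
  have hhalf : 0 < r₀ / 2 := by linarith
  have hmem : Set.Ioi (r₀ / 2) ∈ 𝓝 r₀ := Ioi_mem_nhds (by linarith)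
  have key : Filter.Tendsto
      (fun r => ∫⁻ z in Set.Ioi (0:ℝ), ENNReal.ofReal (min t ((z / r) ^ (α / (d:ℝ)))) ∂lam)
      (𝓝 r₀)
      (𝓝 (∫⁻ z in Set.Ioi (0:ℝ), ENNReal.ofReal (min t ((z / r₀) ^ (α / (d:ℝ)))) ∂lam)) := by
    refine tendsto_lintegral_filter_of_dominated_convergence
      (fun z => ENNReal.ofReal (min t ((z / (r₀ / 2)) ^ (α / (d:ℝ))))) ?_ ?_ ?_ ?_
    · exact Filter.Eventually.of_forall fun r => by fun_prop
    · filter_upwards [hmem] with r hr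
      filter_upwards [ae_restrict_mem measurableSet_Ioi] with z hz
      have hz' : (0:ℝ) < z := hz
      have hr' : r₀ / 2 < r := hr
      refine ENNReal.ofReal_le_ofReal (min_le_min le_rfl ?_)
      have hr0 : 0 < r := hhalf.trans hr'
      have hdr : z / r ≤ z / (r₀ / 2) :=
        div_le_div_of_nonneg_left hz'.le hhalf hr'.le
      exact Real.rpow_le_rpow (div_nonneg hz'.le hr0.le) hdr (by positivity)
    · rw [← tauBar_eq hα hd ht lam hhalf]
      exact tauBar_fin hα hd ht lam hmom hsmall hhalf
    · filter_upwards [ae_restrict_mem measurableSet_Ioi] with z hz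
      have hz' : (0:ℝ) < z := hz
      have h1 : ContinuousAt (fun r : ℝ => z / r) r₀ :=
        continuousAt_const.div continuousAt_id hr₀.ne'
      have h2 : ContinuousAt (fun r : ℝ => (z / r) ^ (α / (d:ℝ))) r₀ :=
        h1.rpow_const (Or.inl (by positivity))
      have h3 : ContinuousAt (fun r : ℝ => min t ((z / r) ^ (α / (d:ℝ)))) r₀ :=
        continuousAt_const.min h2
      exact (ENNReal.continuous_ofReal.continuousAt.comp h3)
  rw [tauBar_eq hα hd ht lam hr₀]
  refine key.congr' ?_
  filter_upwards [Ioi_mem_nhds hr₀] with r hr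
  exact (tauBar_eq hα hd ht lam hr).symm

/-- `f : (0,∞) → (0,∞)` is of extended regular variation at infinity: there are `δ₁, δ₂ ≥ 0`
such that for every `c ≥ 1`,
`c^{-δ₁} ≤ liminf_{s→∞} f(cs)/f(s) ≤ limsup_{s→∞} f(cs)/f(s) ≤ c^{δ₂}`. -/
def ExtendedRegularVariation (f : ℝ → ℝ) : Prop :=
  ∃ δ₁ δ₂ : ℝ, 0 ≤ δ₁ ∧ 0 ≤ δ₂ ∧ ∀ c : ℝ, 1 ≤ c →
    c ^ (-δ₁) ≤ Filter.liminf (fun s => f (c * s) / f s) Filter.atTop ∧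
    Filter.liminf (fun s => f (c * s) / f s) Filter.atTop ≤
      Filter.limsup (fun s => f (c * s) / f s) Filter.atTop ∧
    Filter.limsup (fun s => f (c * s) / f s) Filter.atTop ≤ c ^ δ₂

theorem stmt1 (d : ℕ) (hd : 1 ≤ d) (α : ℝ) (hα : α ∈ Set.Ioo (0:ℝ) 2) (t : ℝ) (ht : 0 < t)
    (lam : MeasureTheory.Measure ℝ) [SigmaFinite lam]
    (hlam0 : lam (Set.Iic 0) = 0) (hlam_ne : lam ≠ 0)
    (hmom : ∫⁻ z in Set.Ioi (0:ℝ), ENNReal.ofReal (min 1 (z ^ 2)) ∂lam ≠ ⊤)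
    (hsmall : ∫⁻ z in Set.Ioc (0:ℝ) 1, ENNReal.ofReal (z ^ (α / (d:ℝ))) ∂lam ≠ ⊤) :
    ContinuousOn (fun r => (tauBar d α t lam r).toReal) (Set.Ioi 0) ∧
    AntitoneOn (fun r => (tauBar d α t lam r).toReal) (Set.Ioi 0) ∧
    0 < Filter.liminf
        (fun r : ℝ => ENNReal.ofReal (r ^ (α / (d:ℝ))) * tauBar d α t lam r) Filter.atTop ∧
    ExtendedRegularVariation (fun r => (tauBar d α t lam r).toReal) := by
  obtain ⟨hα0, hα2⟩ := hα
  have hd0 : (0:ℝ) < d := by exact_mod_cast Nat.pos_of_ne_zero (by omega)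
  have hq : 0 < α / (d:ℝ) := div_pos hα0 hd0
  have hfin : ∀ {r : ℝ}, 0 < r → tauBar d α t lam r ≠ ⊤ := fun hr =>
    tauBar_fin hα0 hd0 ht lam hmom hsmall hr
  have hpos : ∀ {r : ℝ}, 0 < r → 0 < tauBar d α t lam r := fun hr =>
    tauBar_pos hα0 hd0 ht lam hlam0 hlam_ne hr
  refine ⟨?_, ?_, ?_, ?_⟩
  · -- continuity
    intro r₀ hr₀
    have : ContinuousAt (fun r => (tauBar d α t lam r).toReal) r₀ :=
      (ENNReal.tendsto_toReal (hfin hr₀)).comp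
        (tauBar_tendsto hα0 hd0 ht lam hmom hsmall hr₀)
    exact this.continuousWithinAt
  · -- antitone
    intro a ha b hb hab
    exact ENNReal.toReal_mono (hfin ha) (tauBar_anti _ _ lam hab)
  · -- liminf positive
    obtain ⟨ε, hε, hεpos⟩ := exists_eps lam hlam0 hlam_ne
    have hK : (0:ℝ≥0∞) < ENNReal.ofReal (ε ^ (α / (d:ℝ))) * lam (Set.Ioi ε) :=
      ENNReal.mul_pos (ENNReal.ofReal_pos.mpr (Real.rpow_pos_of_pos hε _)).ne' hεpos.ne'
    refine lt_of_lt_of_le hK (Filter.le_liminf_of_le ?_ ?_)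
    · isBoundedDefault
    have htend : Filter.Tendsto (fun r : ℝ => ε ^ (α / (d:ℝ)) / r ^ (α / (d:ℝ)))
        Filter.atTop (𝓝 0) :=
      Filter.Tendsto.div_atTop tendsto_const_nhds (tendsto_rpow_atTop hq)
    filter_upwards [Filter.eventually_gt_atTop (0:ℝ), htend.eventually_le_const ht]
      with r hr hle
    have hle' : (ε / r) ^ (α / (d:ℝ)) ≤ t := by
      rwa [Real.div_rpow hε.le hr.le]
    have hmin : min t ((ε / r) ^ (α / (d:ℝ))) = (ε / r) ^ (α / (d:ℝ)) := min_eq_right hle'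
    have hcalc : ENNReal.ofReal (r ^ (α / (d:ℝ)))
        * (ENNReal.ofReal (min t ((ε / r) ^ (α / (d:ℝ)))) * lam (Set.Ioi ε))
        = ENNReal.ofReal (ε ^ (α / (d:ℝ))) * lam (Set.Ioi ε) := by
      rw [hmin, ← mul_assoc, ← ENNReal.ofReal_mul (by positivity)]
      congr 2
      rw [Real.div_rpow hε.le hr.le, mul_comm,
        div_mul_cancel₀ _ (by positivity : r ^ (α / (d:ℝ)) ≠ 0)]
    calc ENNReal.ofReal (ε ^ (α / (d:ℝ))) * lam (Set.Ioi ε)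
        = ENNReal.ofReal (r ^ (α / (d:ℝ)))
            * (ENNReal.ofReal (min t ((ε / r) ^ (α / (d:ℝ)))) * lam (Set.Ioi ε)) := hcalc.symm
      _ ≤ ENNReal.ofReal (r ^ (α / (d:ℝ))) * tauBar d α t lam r :=
          mul_le_mul_right (tauBar_lower hα0 hd0 ht lam hε hr) _
  · -- extended regular variation
    refine ⟨α / (d:ℝ), 0, hq.le, le_rfl, fun c hc => ?_⟩
    have hc0 : 0 < c := zero_lt_one.trans_le hc
    have hub : ∀ᶠ s in Filter.atTop,
        (tauBar d α t lam (c * s)).toReal / (tauBar d α t lam s).toReal ≤ 1 := by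
      filter_upwards [Filter.eventually_gt_atTop (0:ℝ)] with s hs
      have h1 : (tauBar d α t lam (c * s)).toReal ≤ (tauBar d α t lam s).toReal :=
        ENNReal.toReal_mono (hfin hs) (tauBar_anti _ _ lam (le_mul_of_one_le_left hs.le hc))
      have h2 : 0 < (tauBar d α t lam s).toReal :=
        ENNReal.toReal_pos (hpos hs).ne' (hfin hs)
      exact (div_le_one h2).mpr h1
    have hlb : ∀ᶠ s in Filter.atTop, c ^ (-(α / (d:ℝ)))
        ≤ (tauBar d α t lam (c * s)).toReal / (tauBar d α t lam s).toReal := by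
      filter_upwards [Filter.eventually_gt_atTop (0:ℝ)] with s hs
      have hcs : 0 < c * s := mul_pos hc0 hs
      have h2 : 0 < (tauBar d α t lam s).toReal :=
        ENNReal.toReal_pos (hpos hs).ne' (hfin hs)
      rw [le_div_iff₀ h2]
      have h3 := ENNReal.toReal_mono (hfin hcs) (tauBar_scale hα0 hd0 ht lam hc hs)
      rwa [ENNReal.toReal_mul, ENNReal.toReal_ofReal (by positivity)] at h3
    have hBu := Filter.isBoundedUnder_of_eventually_le hub
    have hBl := Filter.isBoundedUnder_of_eventually_ge hlb
    refine ⟨Filter.le_liminf_of_le hBu.isCoboundedUnder_ge hlb,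
      Filter.liminf_le_limsup hBu hBl, ?_⟩
    rw [Real.rpow_zero]
    exact Filter.limsup_le_of_le hBl.isCoboundedUnder_le hub
end

section
/- Assume ∫_{(0,1]} z^{α/d} λ(dz) < ∞, and suppose there is a slowly varying function l at infinity such that λ̄(r) = l(r)/r^{α/d} for all r ≥ 1. Then, as r → ∞, τ̄(r) ∼ r^{-α/d} · ( ∫_{(0,1]} z^{α/d} λ(dz) + λ̄(1) + (α/d) ∫_{1}^{r} l(u)/u du ). In particular, if ∫_{1}^{∞} l(u)/u du < ∞ then τ̄(r) ∼ r^{-α/d}( ∫_{(0,1]} z^{α/d} λ(dz) + λ̄(1) + (α/d)∫_{1}^{∞} l(u)/u du ), while if ∫_{1}^{∞} l(u)/u du = ∞ then τ̄(r) ∼ (α/d) r^{-α/d} ∫_{1}^{r} l(u)/u du. -/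
open MeasureTheory Set Filter Topology
open scoped ENNReal NNReal

/-- `l : (0,∞) → (0,∞)` is slowly varying at infinity if `l(cr)/l(r) → 1` as `r → ∞`
for every `c > 0`. -/
def SlowlyVarying (l : ℝ → ℝ) : Prop :=
  ∀ c : ℝ, 0 < c → Filter.Tendsto (fun r => l (c * r) / l r) Filter.atTop (nhds 1)

lemma geom_exists {δ : ℝ} (hδ : 0 < δ) :
    ∃ K : ℕ, (1:ℝ)/δ < ∑ k ∈ Finset.range K, ((1+δ/2)⁻¹:ℝ)^(k+1) := by
  set q : ℝ := (1+δ/2)⁻¹ with hq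
  have hq0 : 0 ≤ q := by positivity
  have hq1 : q < 1 := by
    rw [hq, inv_lt_one_iff₀]; right; linarith
  have hs : HasSum (fun n : ℕ => q * q ^ n) (q * (1 - q)⁻¹) :=
    (hasSum_geometric_of_lt_one hq0 hq1).mul_left q
  have hs' : HasSum (fun n : ℕ => q ^ (n+1)) (q * (1 - q)⁻¹) := by
    simpa [pow_succ, mul_comm] using hs
  have hlim := hs'.tendsto_sum_nat
  have hval : q * (1 - q)⁻¹ = 2/δ := by
    rw [hq]
    have h1 : (1:ℝ) + δ/2 ≠ 0 := by positivity
    field_simp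
    rw [show (2:ℝ) + δ - 2 = δ by ring, div_self hδ.ne']
  rw [hval] at hlim
  have : (1:ℝ)/δ < 2/δ := by
    rw [div_lt_div_iff₀ hδ hδ]; nlinarith
  exact ((hlim.eventually (eventually_gt_nhds this)).exists)

lemma div_ratio (g : ℝ → ℝ) (hg0 : ∀ u : ℝ, 1 ≤ u → 0 ≤ g u)
    (hgi : ∀ a b : ℝ, 1 ≤ a → a ≤ b → IntervalIntegrable g volume a b)
    (hdiv : Tendsto (fun r => ∫ u in (1:ℝ)..r, g u) atTop atTop)
    (c : ℝ) (hc : 1 ≤ c)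
    (hsv : ∀ ε : ℝ, 0 < ε → ∀ᶠ u in atTop, g (c * u) ≤ (1+ε)/c * g u) :
    Tendsto (fun r => (∫ u in (1:ℝ)..(c*r), g u) / (∫ u in (1:ℝ)..r, g u)) atTop (nhds 1) := by
  have hc0 : (0:ℝ) < c := lt_of_lt_of_le one_pos hc
  set J : ℝ → ℝ := fun r => ∫ u in (1:ℝ)..r, g u with hJ
  set D : ℝ → ℝ := fun r => ∫ u in r..(c*r), g u with hD
  have hmul : ∀ r : ℝ, 1 ≤ r → r ≤ c * r := fun r hr => le_mul_of_one_le_left (by linarith) hc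
  have hJadd : ∀ r : ℝ, 1 ≤ r → J (c*r) = J r + D r := by
    intro r hr
    exact (intervalIntegral.integral_add_adjacent_intervals (hgi 1 r le_rfl hr)
      (hgi r (c*r) hr (hmul r hr))).symm
  have hD0 : ∀ r : ℝ, 1 ≤ r → 0 ≤ D r := by
    intro r hr
    refine intervalIntegral.integral_nonneg (hmul r hr) (fun u hu => hg0 u ?_)
    exact le_trans hr hu.1
  have hJ0 : ∀ r : ℝ, 1 ≤ r → 0 ≤ J r := by
    intro r hr
    exact intervalIntegral.integral_nonneg hr (fun u hu => hg0 u hu.1)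
  -- key : D r / J r → 0
  have T0 : Tendsto (fun r => D r / J r) atTop (nhds 0) := by
    rw [NormedAddCommGroup.tendsto_nhds_zero]
    intro δ hδ
    set ε : ℝ := δ/2 with hε
    have hε0 : 0 < ε := by positivity
    obtain ⟨K, hK⟩ := geom_exists hδ
    set q : ℝ := (1+ε)⁻¹ with hq
    have hq0 : 0 < q := by positivity
    obtain ⟨M₀, hM₀⟩ := (hsv ε hε0).exists_forall_of_atTop
    set M : ℝ := max M₀ 1 with hM
    have hM1 : (1:ℝ) ≤ M := le_max_right _ _
    -- one step
    have step : ∀ r : ℝ, M ≤ r → D (c*r) ≤ (1+ε) * D r := by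
      intro r hr
      have hr1 : (1:ℝ) ≤ r := le_trans hM1 hr
      have hsub : D (c*r) = c * ∫ v in r..(c*r), g (c*v) := by
        have := intervalIntegral.integral_comp_mul_left g (a := r) (b := c*r) (ne_of_gt hc0)
        rw [hD]; rw [this]
        rw [smul_eq_mul, ← mul_assoc, mul_inv_cancel₀ (ne_of_gt hc0), one_mul]
      rw [hsub]
      have hmono : (∫ v in r..(c*r), g (c*v)) ≤ ∫ v in r..(c*r), (1+ε)/c * g v := by
        refine intervalIntegral.integral_mono_on (hmul r hr1) ?_ ?_ ?_
        · have := (hgi (c*r) (c*(c*r)) (by nlinarith) (by nlinarith [mul_le_mul_of_nonneg_left (hmul r hr1) hc0.le])).comp_mul_left (c := c)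
          rwa [mul_div_cancel_left₀ _ (ne_of_gt hc0), mul_div_cancel_left₀ _ (ne_of_gt hc0)] at this
        · exact ((hgi r (c*r) hr1 (hmul r hr1)).const_mul _)
        · intro x hx
          exact hM₀ x (le_trans (le_max_left _ _) (le_trans hr hx.1))
      calc c * ∫ v in r..(c*r), g (c*v) ≤ c * ∫ v in r..(c*r), (1+ε)/c * g v := by
            apply mul_le_mul_of_nonneg_left hmono (le_of_lt hc0)
        _ = (1+ε) * D r := by
            rw [intervalIntegral.integral_const_mul, hD]
            field_simp
    -- iterate
    have iter : ∀ k : ℕ, ∀ r : ℝ, M ≤ r → D (c^k * r) ≤ (1+ε)^k * D r := by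
      intro k
      induction k with
      | zero => intro r _; simp
      | succ n ih =>
        intro r hr
        have h1 : D (c^(n+1) * r) = D (c * (c^n * r)) := by ring_nf
        have h2 : M ≤ c^n * r := le_trans hr (le_mul_of_one_le_left
          (le_trans zero_le_one (le_trans hM1 hr)) (one_le_pow₀ hc))
        calc D (c^(n+1) * r) = D (c * (c^n * r)) := h1
          _ ≤ (1+ε) * D (c^n * r) := step _ h2
          _ ≤ (1+ε) * ((1+ε)^n * D r) := by
              apply mul_le_mul_of_nonneg_left (ih r hr) (by positivity)
          _ = (1+ε)^(n+1) * D r := by ring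
    -- telescoping
    have tel : ∀ (k : ℕ) (r : ℝ), 1 ≤ r →
        J (c^k * r) = J r + ∑ i ∈ Finset.range k, D (c^i * r) := by
      intro k
      induction k with
      | zero => intro r _; simp
      | succ n ih =>
        intro r hr
        have h2 : (1:ℝ) ≤ c^n * r := le_trans hr (le_mul_of_one_le_left
          (le_trans zero_le_one hr) (one_le_pow₀ hc))
        have : J (c^(n+1) * r) = J (c * (c^n * r)) := by ring_nf
        rw [this, hJadd _ h2, ih r hr, Finset.sum_range_succ]
        ring
    -- final bound
    have hJpos := hdiv.eventually_gt_atTop (0:ℝ)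
    filter_upwards [hJpos, eventually_ge_atTop (c^K * M), eventually_ge_atTop (1:ℝ)]
      with s hJs hs hs1
    set r : ℝ := s / c^K with hrdef
    have hcK : (0:ℝ) < c^K := by positivity
    have hrM : M ≤ r := (le_div_iff₀ hcK).2 (by rw [mul_comm]; exact hs)
    have hr1 : (1:ℝ) ≤ r := le_trans hM1 hrM
    have hsr : s = c^K * r := by rw [hrdef]; exact (mul_div_cancel₀ s hcK.ne').symm
    set SK : ℝ := ∑ k ∈ Finset.range K, q^(k+1) with hSK
    have hSKpos : 0 < SK := lt_trans (by positivity) hK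
    have claim2 : ∀ i ∈ Finset.range K, q^(i+1) * D s ≤ D (c^(K-1-i) * r) := by
      intro i hi
      have hiK : i < K := Finset.mem_range.1 hi
      have hbase : M ≤ c^(K-1-i) * r := le_trans hrM (le_mul_of_one_le_left
        (le_trans zero_le_one hr1) (one_le_pow₀ hc))
      have hiter := iter (i+1) (c^(K-1-i) * r) hbase
      have hexp : c^(i+1) * (c^(K-1-i) * r) = s := by
        rw [hsr, ← mul_assoc, ← pow_add]
        congr 2
        omega
      rw [hexp] at hiter
      have hqe : q^(i+1) * (1+ε)^(i+1) = 1 := by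
        rw [← mul_pow, hq, inv_mul_cancel₀ (by positivity), one_pow]
      calc q^(i+1) * D s ≤ q^(i+1) * ((1+ε)^(i+1) * D (c^(K-1-i) * r)) := by
            apply mul_le_mul_of_nonneg_left hiter (by positivity)
        _ = (q^(i+1) * (1+ε)^(i+1)) * D (c^(K-1-i) * r) := by ring
        _ = D (c^(K-1-i) * r) := by rw [hqe, one_mul]
    have hsum : SK * D s ≤ J s := by
      have h1 : ∑ i ∈ Finset.range K, q^(i+1) * D s ≤
          ∑ i ∈ Finset.range K, D (c^(K-1-i) * r) := Finset.sum_le_sum claim2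
      have h2 : ∑ i ∈ Finset.range K, D (c^(K-1-i) * r) =
          ∑ i ∈ Finset.range K, D (c^i * r) := Finset.sum_range_reflect (fun i => D (c^i * r)) K
      have h3 : J s = J r + ∑ i ∈ Finset.range K, D (c^i * r) := by
        rw [hsr]; exact tel K r hr1
      have h4 : 0 ≤ J r := hJ0 r hr1
      calc SK * D s = ∑ i ∈ Finset.range K, q^(i+1) * D s := by rw [hSK, Finset.sum_mul]
        _ ≤ ∑ i ∈ Finset.range K, D (c^i * r) := by rw [← h2]; exact h1
        _ ≤ J s := by rw [h3]; linarith
    have hDs0 : 0 ≤ D s := hD0 s hs1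
    have hfinal : D s / J s < δ := by
      rw [div_lt_iff₀ hJs]
      rcases eq_or_lt_of_le hDs0 with h0 | h0
      · rw [← h0]; positivity
      · have hK2 : 1 < SK * δ := (div_lt_iff₀ hδ).1 hK
        nlinarith [mul_lt_mul_of_pos_right hK2 h0,
          mul_le_mul_of_nonneg_left hsum (le_of_lt hδ)]
    rw [Real.norm_eq_abs, abs_of_nonneg (div_nonneg hDs0 (le_of_lt hJs))]
    exact hfinal
  -- conclude
  have hfin : Tendsto (fun r => 1 + D r / J r) atTop (nhds 1) := by
    simpa using (tendsto_const_nhds (α := ℝ) (f := atTop) (x := (1:ℝ))).add T0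
  refine hfin.congr' ?_
  filter_upwards [eventually_ge_atTop (1:ℝ), hdiv.eventually_gt_atTop 0] with r h1 hJr
  show 1 + D r / J r = J (c*r) / J r
  rw [hJadd r h1, add_div, div_self (ne_of_gt hJr)]


lemma lam_Ioi_ne_top (lam : Measure ℝ)
    (hmom : ∫⁻ z in Set.Ioi (0:ℝ), ENNReal.ofReal (min 1 (z ^ 2)) ∂lam ≠ ⊤) :
    lam (Set.Ioi (1:ℝ)) ≠ ⊤ := by
  have h1 : lam (Set.Ioi (1:ℝ)) = ∫⁻ z in Set.Ioi (1:ℝ), ENNReal.ofReal (min 1 (z^2)) ∂lam := by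
    rw [← setLIntegral_one]
    refine setLIntegral_congr_fun_ae measurableSet_Ioi (ae_of_all _ (fun z hz => ?_))
    have : min 1 (z^2) = 1 := min_eq_left (by nlinarith [mem_Ioi.1 hz])
    rw [this, ENNReal.ofReal_one]
  rw [h1]
  refine ne_top_of_le_ne_top hmom (lintegral_mono_set (fun z hz => ?_))
  exact lt_trans one_pos (mem_Ioi.1 hz)

lemma tauBar_formula (d : ℕ) (hd : 1 ≤ d) (α : ℝ) (hα : α ∈ Set.Ioo (0:ℝ) 2) (t : ℝ) (ht : 0 < t)
    (lam : MeasureTheory.Measure ℝ) [SigmaFinite lam]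
    (hmom : ∫⁻ z in Set.Ioi (0:ℝ), ENNReal.ofReal (min 1 (z ^ 2)) ∂lam ≠ ⊤)
    (hsmall : ∫⁻ z in Set.Ioc (0:ℝ) 1, ENNReal.ofReal (z ^ (α / (d:ℝ))) ∂lam ≠ ⊤)
    (l : ℝ → ℝ) (hl_pos : ∀ x : ℝ, 0 < x → 0 < l x)
    (hlaml : ∀ r : ℝ, 1 ≤ r → (lam (Set.Ioi r)).toReal = l r / r ^ (α / (d:ℝ)))
    (r : ℝ) (hr1 : 1 ≤ r) (hrt : r ^ (-(α / (d:ℝ))) ≤ t) :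
    tauBar d α t lam r = ENNReal.ofReal (r ^ (-(α / (d:ℝ))) *
      ((∫⁻ z in Set.Ioc (0:ℝ) 1, ENNReal.ofReal (z ^ (α / (d:ℝ))) ∂lam).toReal
        + (lam (Set.Ioi (1:ℝ))).toReal
        + α / (d:ℝ) * ∫ u in (1:ℝ)..(r * t ^ (α / (d:ℝ))⁻¹), l u / u)) := by
  have hd0 : (0:ℝ) < d := by exact_mod_cast Nat.lt_of_lt_of_le Nat.zero_lt_one hd
  obtain ⟨hα0, hα2⟩ := hα
  set β : ℝ := α / (d:ℝ) with hβdef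
  have hβ : 0 < β := div_pos hα0 hd0
  set γ : ℝ := (d:ℝ) / α with hγdef
  have hγ : 0 < γ := div_pos hd0 hα0
  have hγβ : γ * β = 1 := by
    show ((d:ℝ)/α) * (α/(d:ℝ)) = 1
    field_simp
  have hr0 : (0:ℝ) < r := lt_of_lt_of_le one_pos hr1
  set R : ℝ := r * t ^ β⁻¹ with hRdef
  have htb : (0:ℝ) < t ^ β⁻¹ := Real.rpow_pos_of_pos ht _
  have hR1 : (1:ℝ) ≤ R := by
    have h1 : (r ^ (-β)) ^ β⁻¹ ≤ t ^ β⁻¹ :=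
      Real.rpow_le_rpow (le_of_lt (Real.rpow_pos_of_pos hr0 _)) hrt (by positivity)
    have h2 : (r ^ (-β)) ^ β⁻¹ = r⁻¹ := by
      rw [← Real.rpow_mul hr0.le, neg_mul, mul_inv_cancel₀ hβ.ne', Real.rpow_neg_one]
    rw [h2] at h1
    calc (1:ℝ) = r * r⁻¹ := (mul_inv_cancel₀ hr0.ne').symm
      _ ≤ r * t ^ β⁻¹ := by apply mul_le_mul_of_nonneg_left h1 hr0.le
  have hRβ : R ^ β = r ^ β * t := by
    rw [hRdef, Real.mul_rpow hr0.le htb.le, ← Real.rpow_mul ht.le,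
      inv_mul_cancel₀ hβ.ne', Real.rpow_one]
  have hrβ : (0:ℝ) < r ^ β := Real.rpow_pos_of_pos hr0 _
  have hrnegβ : r ^ (-β) = (r ^ β)⁻¹ := Real.rpow_neg hr0.le β
  -- the pointwise equivalence
  have hiff : ∀ s z : ℝ, 0 < s → 0 < z →
      (r < z * s ^ (-γ) ↔ s < z ^ β * r ^ (-β)) := by
    intro s z hs hz
    have hsγ : (0:ℝ) < s ^ γ := Real.rpow_pos_of_pos hs _
    rw [Real.rpow_neg hs.le, ← div_eq_mul_inv, lt_div_iff₀ hsγ]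
    rw [← Real.rpow_lt_rpow_iff (by positivity) hz.le hβ]
    rw [Real.mul_rpow hr0.le hsγ.le, ← Real.rpow_mul hs.le, hγβ, Real.rpow_one]
    rw [hrnegβ, ← div_eq_mul_inv, lt_div_iff₀ hrβ]
    rw [mul_comm (r ^ β) s, mul_comm s (r ^ β)]
  -- volume of slices
  have hvol : ∀ m : ℝ, 0 < m → volume (Set.Ioc 0 t ∩ Set.Iio m) = ENNReal.ofReal (min m t) := by
    intro m hm
    rcases le_or_gt m t with h | h
    · have : Set.Ioc 0 t ∩ Set.Iio m = Set.Ioo 0 m := by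
        ext x
        simp only [mem_inter_iff, mem_Ioc, mem_Iio, mem_Ioo]
        constructor
        · rintro ⟨⟨h1, _⟩, h3⟩; exact ⟨h1, h3⟩
        · rintro ⟨h1, h3⟩; exact ⟨⟨h1, le_trans h3.le h⟩, h3⟩
      rw [this, Real.volume_Ioo, sub_zero, min_eq_left h]
    · have : Set.Ioc 0 t ∩ Set.Iio m = Set.Ioc 0 t := by
        rw [inter_eq_left]
        intro x hx
        exact lt_of_le_of_lt hx.2 h
      rw [this, Real.volume_Ioc, sub_zero, min_eq_right h.le]
  -- Step A
  have hSm : MeasurableSet {p : ℝ × ℝ | r < p.2 * p.1 ^ (-((d : ℝ) / α))} := by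
    apply measurableSet_lt measurable_const
    exact measurable_snd.mul (measurable_fst.pow measurable_const)
  have stepA : tauBar d α t lam r
      = ∫⁻ z in Set.Ioi (0:ℝ), ENNReal.ofReal (min (z ^ β * r ^ (-β)) t) ∂lam := by
    rw [tauBar, Measure.prod_apply_symm hSm]
    refine setLIntegral_congr_fun_ae measurableSet_Ioi (ae_of_all _ (fun z hz => ?_)) |>.symm |>.symm
    have hz : (0:ℝ) < z := mem_Ioi.1 hz
    have hmz : (0:ℝ) < z ^ β * r ^ (-β) := by positivity
    have hpre : (fun s => (s, z)) ⁻¹' {p : ℝ × ℝ | r < p.2 * p.1 ^ (-((d : ℝ) / α))}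
        = {s : ℝ | r < z * s ^ (-γ)} := rfl
    rw [hpre, Measure.restrict_apply]
    · have hset : {s : ℝ | r < z * s ^ (-γ)} ∩ Set.Ioc 0 t
          = Set.Ioc 0 t ∩ Set.Iio (z ^ β * r ^ (-β)) := by
        ext s
        simp only [mem_inter_iff, mem_setOf_eq, mem_Ioc, mem_Iio]
        constructor
        · rintro ⟨h1, h2⟩; exact ⟨h2, (hiff s z h2.1 hz).1 h1⟩
        · rintro ⟨h2, h1⟩; exact ⟨(hiff s z h2.1 hz).2 h1, h2⟩
      rw [hset, hvol _ hmz]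
    · exact measurableSet_lt measurable_const
        (measurable_const.mul (measurable_id.pow measurable_const))
  -- finiteness
  have hfin1 : lam (Set.Ioi (1:ℝ)) ≠ ⊤ := lam_Ioi_ne_top lam hmom
  -- split the integral
  have hsplit : ∫⁻ z in Set.Ioi (0:ℝ), ENNReal.ofReal (min (z ^ β * r ^ (-β)) t) ∂lam
      = (∫⁻ z in Set.Ioc (0:ℝ) 1, ENNReal.ofReal (min (z ^ β * r ^ (-β)) t) ∂lam)
        + ∫⁻ z in Set.Ioi (1:ℝ), ENNReal.ofReal (min (z ^ β * r ^ (-β)) t) ∂lam := by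
    rw [← Set.Ioc_union_Ioi_eq_Ioi (zero_le_one (α := ℝ)),
      lintegral_union measurableSet_Ioi Set.Ioc_disjoint_Ioi_same]
  -- piece 1
  have hmeasz : Measurable fun z : ℝ => ENNReal.ofReal (z ^ β) :=
    (measurable_id.pow measurable_const).ennreal_ofReal
  have hpiece1 : ∫⁻ z in Set.Ioc (0:ℝ) 1, ENNReal.ofReal (min (z ^ β * r ^ (-β)) t) ∂lam
      = ENNReal.ofReal (r ^ (-β)) *
        ∫⁻ z in Set.Ioc (0:ℝ) 1, ENNReal.ofReal (z ^ β) ∂lam := by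
    rw [← lintegral_const_mul _ hmeasz]
    refine setLIntegral_congr_fun_ae measurableSet_Ioc (ae_of_all _ (fun z hz => ?_))
    have hz0 : (0:ℝ) < z := hz.1
    have hle : z ^ β * r ^ (-β) ≤ t := by
      have h1 : z ^ β ≤ 1 := Real.rpow_le_one hz0.le hz.2 hβ.le
      have h2 : z ^ β * r ^ (-β) ≤ 1 * r ^ (-β) :=
        mul_le_mul_of_nonneg_right h1 (Real.rpow_pos_of_pos hr0 _).le
      rw [one_mul] at h2
      exact le_trans h2 hrt
    rw [min_eq_left hle, mul_comm (z ^ β) (r ^ (-β)),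
      ENNReal.ofReal_mul (Real.rpow_pos_of_pos hr0 _).le]
  -- piece 2 : peel off the constant r^{-β}
  have hpiece2 : ∫⁻ z in Set.Ioi (1:ℝ), ENNReal.ofReal (min (z ^ β * r ^ (-β)) t) ∂lam
      = ENNReal.ofReal (r ^ (-β)) * lam (Set.Ioi 1)
        + ∫⁻ z in Set.Ioi (1:ℝ), ENNReal.ofReal (min (z ^ β * r ^ (-β)) t - r ^ (-β)) ∂lam := by
    have hpt : ∀ᵐ z ∂lam, z ∈ Set.Ioi (1:ℝ) → ENNReal.ofReal (min (z ^ β * r ^ (-β)) t)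
        = ENNReal.ofReal (r ^ (-β)) + ENNReal.ofReal (min (z ^ β * r ^ (-β)) t - r ^ (-β)) := by
      refine ae_of_all _ (fun z hz => ?_)
      have hz1 : (1:ℝ) < z := hz
      have h1 : r ^ (-β) ≤ min (z ^ β * r ^ (-β)) t := by
        refine le_min ?_ hrt
        have h2 : (1:ℝ) ≤ z ^ β := by
          have := Real.rpow_le_rpow zero_le_one hz1.le hβ.le
          rwa [Real.one_rpow] at this
        nth_rewrite 1 [← one_mul (r ^ (-β))]
        exact mul_le_mul_of_nonneg_right h2 (Real.rpow_pos_of_pos hr0 _).le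
      calc ENNReal.ofReal (min (z ^ β * r ^ (-β)) t)
          = ENNReal.ofReal (r ^ (-β) + (min (z ^ β * r ^ (-β)) t - r ^ (-β))) := by
            congr 1; ring
        _ = _ := ENNReal.ofReal_add (Real.rpow_pos_of_pos hr0 _).le (by linarith)
    rw [setLIntegral_congr_fun_ae measurableSet_Ioi hpt,
      lintegral_add_left measurable_const, setLIntegral_const]
  -- the product set and function for the swap
  set S2 : Set (ℝ × ℝ) := {p : ℝ × ℝ | 1 < p.2 ∧ p.2 < R ∧ p.2 < p.1} with hS2def
  have hS2m : MeasurableSet S2 := by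
    have : S2 = {p : ℝ × ℝ | 1 < p.2} ∩ ({p : ℝ × ℝ | p.2 < R} ∩ {p : ℝ × ℝ | p.2 < p.1}) := rfl
    rw [this]
    exact (measurableSet_lt measurable_const measurable_snd).inter
      ((measurableSet_lt measurable_snd measurable_const).inter
        (measurableSet_lt measurable_snd measurable_fst))
  have hS2mem : ∀ p : ℝ × ℝ, p ∈ S2 ↔ (1 < p.2 ∧ p.2 < R ∧ p.2 < p.1) := fun p => Iff.rfl
  set F : ℝ × ℝ → ℝ≥0∞ :=
    fun p => S2.indicator (fun q => ENNReal.ofReal (β * q.2 ^ (β-1) * r ^ (-β))) p with hFdef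
  have hFm : Measurable F :=
    (((measurable_const.mul (measurable_snd.pow measurable_const)).mul
      measurable_const).ennreal_ofReal).indicator hS2m
  -- left evaluation
  have hEleft : ∀ z ∈ Set.Ioi (1:ℝ), (∫⁻ u, F (z, u))
      = ENNReal.ofReal (min (z ^ β * r ^ (-β)) t - r ^ (-β)) := by
    intro z hz
    have hz1 : (1:ℝ) < z := hz
    set mz : ℝ := min R z with hmzdef
    have hmz1 : (1:ℝ) ≤ mz := le_min hR1 hz1.le
    have hfun : (fun u => F (z, u)) = (Set.Ioo (1:ℝ) mz).indicator
        (fun u => ENNReal.ofReal (β * u ^ (β-1) * r ^ (-β))) := by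
      funext u
      by_cases h : u ∈ Set.Ioo (1:ℝ) mz
      · rw [Set.indicator_of_mem h]
        exact Set.indicator_of_mem ((hS2mem (z,u)).2
          ⟨h.1, (lt_min_iff.1 h.2).1, (lt_min_iff.1 h.2).2⟩) _
      · rw [Set.indicator_of_notMem h]
        refine Set.indicator_of_notMem (fun hc => h ?_) _
        obtain ⟨h1, h2, h3⟩ := (hS2mem (z,u)).1 hc
        exact ⟨h1, lt_min_iff.2 ⟨h2, h3⟩⟩
    rw [hfun, lintegral_indicator measurableSet_Ioo]
    -- evaluate the elementary integral
    have hcont : ContinuousOn (fun u : ℝ => β * u ^ (β-1) * r ^ (-β)) (Set.Icc 1 mz) := by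
      refine ((continuousOn_const.mul (ContinuousOn.rpow_const continuousOn_id
        (fun x hx => Or.inl (by linarith [hx.1] : x ≠ 0)))).mul continuousOn_const)
    have hintg : IntegrableOn (fun u : ℝ => β * u ^ (β-1) * r ^ (-β)) (Set.Ioo 1 mz) :=
      (hcont.integrableOn_Icc).mono_set Set.Ioo_subset_Icc_self
    have hnn : 0 ≤ᵐ[volume.restrict (Set.Ioo (1:ℝ) mz)]
        (fun u : ℝ => β * u ^ (β-1) * r ^ (-β)) := by
      refine ae_restrict_of_forall_mem measurableSet_Ioo (fun u hu => ?_)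
      have hu0 : (0:ℝ) < u := lt_trans one_pos hu.1
      positivity
    rw [← ofReal_integral_eq_lintegral_ofReal hintg hnn]
    congr 1
    have heval : ∫ u in Set.Ioo (1:ℝ) mz, (β * u ^ (β-1) * r ^ (-β))
        = mz ^ β * r ^ (-β) - r ^ (-β) := by
      rw [← integral_Ioc_eq_integral_Ioo, ← intervalIntegral.integral_of_le hmz1]
      have hfe : (fun u : ℝ => β * u ^ (β-1) * r ^ (-β))
          = fun u : ℝ => (β * r ^ (-β)) * u ^ (β-1) := by funext u; ring
      rw [hfe, intervalIntegral.integral_const_mul,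
        integral_rpow (Or.inl (by linarith : (-1:ℝ) < β - 1)), sub_add_cancel, Real.one_rpow]
      have hβne : β ≠ 0 := hβ.ne'
      field_simp
    rw [heval]
    -- identify mz^β r^{-β} with the min
    rcases le_total z R with h | h
    · rw [hmzdef, min_eq_right h]
      have hzR : z ^ β ≤ R ^ β := Real.rpow_le_rpow (by linarith) h hβ.le
      rw [hRβ] at hzR
      have : z ^ β * r ^ (-β) ≤ t := by
        rw [hrnegβ]
        calc z ^ β * (r ^ β)⁻¹ ≤ (r ^ β * t) * (r ^ β)⁻¹ :=
              mul_le_mul_of_nonneg_right hzR (by positivity)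
          _ = t := by field_simp
      rw [min_eq_left this]
    · rw [hmzdef, min_eq_left h]
      have hRz : R ^ β ≤ z ^ β := Real.rpow_le_rpow (by positivity) h hβ.le
      have hRt : R ^ β * r ^ (-β) = t := by
        rw [hRβ, hrnegβ]; field_simp
      have : t ≤ z ^ β * r ^ (-β) := by
        rw [← hRt]
        exact mul_le_mul_of_nonneg_right hRz (Real.rpow_pos_of_pos hr0 _).le
      rw [min_eq_right this, hRt]
  -- right evaluation
  have hEright : ∀ u : ℝ, (∫⁻ z in Set.Ioi (1:ℝ), F (z, u) ∂lam)
      = (Set.Ioo (1:ℝ) R).indicator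
        (fun u => ENNReal.ofReal (β * u ^ (β-1) * r ^ (-β)) * lam (Set.Ioi u)) u := by
    intro u
    by_cases hu : u ∈ Set.Ioo (1:ℝ) R
    · rw [Set.indicator_of_mem hu]
      have hz : ∀ z : ℝ, F (z, u) = (Set.Ioi u).indicator
          (fun _ => ENNReal.ofReal (β * u ^ (β-1) * r ^ (-β))) z := by
        intro z
        by_cases hzu : z ∈ Set.Ioi u
        · rw [Set.indicator_of_mem hzu]
          exact Set.indicator_of_mem ((hS2mem (z,u)).2 ⟨hu.1, hu.2, hzu⟩) _
        · rw [Set.indicator_of_notMem hzu]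
          exact Set.indicator_of_notMem (fun hc => hzu ((hS2mem (z,u)).1 hc).2.2) _
      rw [lintegral_congr hz, lintegral_indicator measurableSet_Ioi, lintegral_const,
        Measure.restrict_restrict measurableSet_Ioi, Measure.restrict_apply MeasurableSet.univ,
        Set.univ_inter]
      have : Set.Ioi u ∩ Set.Ioi (1:ℝ) = Set.Ioi u :=
        Set.inter_eq_left.2 (Set.Ioi_subset_Ioi hu.1.le)
      rw [this]
    · rw [Set.indicator_of_notMem hu]
      have hz : ∀ z : ℝ, F (z, u) = 0 := fun z =>
        Set.indicator_of_notMem (fun hc => hu ⟨((hS2mem (z,u)).1 hc).1, ((hS2mem (z,u)).1 hc).2.1⟩) _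
      simp [hz]
  -- swap
  have hswap : ∫⁻ z in Set.Ioi (1:ℝ), (∫⁻ u, F (z, u)) ∂lam
      = ∫⁻ u, (∫⁻ z in Set.Ioi (1:ℝ), F (z, u) ∂lam) := by
    exact lintegral_lintegral_swap (by exact hFm.aemeasurable)
  -- the measurable antitone tail function
  have hanti : Antitone (fun u : ℝ => lam (Set.Ioi u)) :=
    fun a b hab => measure_mono (Set.Ioi_subset_Ioi hab)
  have htail_meas : Measurable (fun u : ℝ => lam (Set.Ioi u)) := hanti.measurable
  -- the remainder integral
  have hJRnn : 0 ≤ ∫ u in (1:ℝ)..R, l u / u := by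
    refine intervalIntegral.integral_nonneg hR1 (fun u hu => ?_)
    have hu0 : (0:ℝ) < u := lt_of_lt_of_le one_pos hu.1
    exact div_nonneg (hl_pos u hu0).le hu0.le
  have hrem : ∫⁻ z in Set.Ioi (1:ℝ), ENNReal.ofReal (min (z ^ β * r ^ (-β)) t - r ^ (-β)) ∂lam
      = ENNReal.ofReal (β * r ^ (-β) * ∫ u in (1:ℝ)..R, l u / u) := by
    have h1 : ∫⁻ z in Set.Ioi (1:ℝ), ENNReal.ofReal (min (z ^ β * r ^ (-β)) t - r ^ (-β)) ∂lam
        = ∫⁻ z in Set.Ioi (1:ℝ), (∫⁻ u, F (z, u)) ∂lam :=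
      setLIntegral_congr_fun_ae measurableSet_Ioi
        (ae_of_all _ (fun z hz => (hEleft z hz).symm))
    rw [h1, hswap]
    have h2 : ∫⁻ u, (∫⁻ z in Set.Ioi (1:ℝ), F (z, u) ∂lam)
        = ∫⁻ u in Set.Ioo (1:ℝ) R,
            ENNReal.ofReal (β * u ^ (β-1) * r ^ (-β)) * lam (Set.Ioi u) := by
      rw [lintegral_congr hEright, lintegral_indicator measurableSet_Ioo]
    rw [h2]
    -- identify the integrand with ofReal of a real function
    have h3 : ∫⁻ u in Set.Ioo (1:ℝ) R,
          ENNReal.ofReal (β * u ^ (β-1) * r ^ (-β)) * lam (Set.Ioi u)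
        = ∫⁻ u in Set.Ioo (1:ℝ) R, ENNReal.ofReal (β * r ^ (-β) * (l u / u)) := by
      refine setLIntegral_congr_fun_ae measurableSet_Ioo (ae_of_all _ (fun u hu => ?_))
      have hu1 : (1:ℝ) < u := hu.1
      have hu0 : (0:ℝ) < u := lt_trans one_pos hu1
      have hfinu : lam (Set.Ioi u) ≠ ⊤ :=
        ne_top_of_le_ne_top hfin1 (measure_mono (Set.Ioi_subset_Ioi hu1.le))
      have htail : lam (Set.Ioi u) = ENNReal.ofReal (l u / u ^ β) := by
        rw [← hlaml u hu1.le, ENNReal.ofReal_toReal hfinu]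
      rw [htail, ← ENNReal.ofReal_mul (by positivity)]
      congr 1
      have huβ : (0:ℝ) < u ^ β := Real.rpow_pos_of_pos hu0 _
      have hpow : u ^ (β - 1) = u ^ β / u := by
        rw [Real.rpow_sub hu0, Real.rpow_one]
      rw [hpow]
      field_simp
    rw [h3]
    -- convert to a Bochner integral
    have hbound : ∀ u ∈ Set.Ioo (1:ℝ) R, l u / u = (lam (Set.Ioi u)).toReal * u ^ (β - 1) := by
      intro u hu
      have hu1 : (1:ℝ) < u := hu.1
      have hu0 : (0:ℝ) < u := lt_trans one_pos hu1
      have huβ : (0:ℝ) < u ^ β := Real.rpow_pos_of_pos hu0 _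
      have hpow : u ^ (β - 1) = u ^ β / u := by
        rw [Real.rpow_sub hu0, Real.rpow_one]
      rw [hlaml u hu1.le, hpow]
      field_simp
    set H : ℝ → ℝ := fun u => β * r ^ (-β) * ((lam (Set.Ioi u)).toReal * u ^ (β - 1)) with hHdef
    have hHm : Measurable H :=
      measurable_const.mul (htail_meas.ennreal_toReal.mul (measurable_id.pow measurable_const))
    have hHint : IntegrableOn H (Set.Ioo (1:ℝ) R) := by
      refine Measure.integrableOn_of_bounded (M := β * r ^ (-β) *
        ((lam (Set.Ioi (1:ℝ))).toReal * max 1 (R ^ (β - 1)))) ?_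
        hHm.aestronglyMeasurable ?_
      · rw [Real.volume_Ioo]; exact ENNReal.ofReal_ne_top
      · refine ae_restrict_of_forall_mem measurableSet_Ioo (fun u hu => ?_)
        have hu1 : (1:ℝ) < u := hu.1
        have hu0 : (0:ℝ) < u := lt_trans one_pos hu1
        have htR : (lam (Set.Ioi u)).toReal ≤ (lam (Set.Ioi (1:ℝ))).toReal :=
          ENNReal.toReal_mono hfin1 (measure_mono (Set.Ioi_subset_Ioi hu1.le))
        have hpw : u ^ (β - 1) ≤ max 1 (R ^ (β - 1)) := by
          rcases le_total (β - 1) 0 with hb | hb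
          · exact le_trans (Real.rpow_le_one_of_one_le_of_nonpos hu1.le hb) (le_max_left _ _)
          · exact le_trans (Real.rpow_le_rpow hu0.le hu.2.le hb) (le_max_right _ _)
        have h0a : 0 ≤ (lam (Set.Ioi u)).toReal := ENNReal.toReal_nonneg
        have h0b : 0 ≤ u ^ (β - 1) := (Real.rpow_pos_of_pos hu0 _).le
        rw [hHdef, Real.norm_eq_abs, abs_of_nonneg (by positivity)]
        refine mul_le_mul_of_nonneg_left ?_ (by positivity)
        exact mul_le_mul htR hpw h0b ENNReal.toReal_nonneg
    have hGint : IntegrableOn (fun u => β * r ^ (-β) * (l u / u)) (Set.Ioo (1:ℝ) R) := by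
      refine hHint.congr_fun (fun u hu => ?_) measurableSet_Ioo
      rw [hHdef, hbound u hu]
    have hGnn : 0 ≤ᵐ[volume.restrict (Set.Ioo (1:ℝ) R)]
        (fun u => β * r ^ (-β) * (l u / u)) := by
      refine ae_restrict_of_forall_mem measurableSet_Ioo (fun u hu => ?_)
      have hu0 : (0:ℝ) < u := lt_trans one_pos hu.1
      have := (hl_pos u hu0).le
      positivity
    rw [← ofReal_integral_eq_lintegral_ofReal hGint hGnn]
    congr 1
    rw [← integral_Ioc_eq_integral_Ioo, ← intervalIntegral.integral_of_le hR1,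
      intervalIntegral.integral_const_mul]
  -- assemble everything
  rw [stepA, hsplit, hpiece1, hpiece2, hrem]
  have hC : (∫⁻ z in Set.Ioc (0:ℝ) 1, ENNReal.ofReal (z ^ β) ∂lam)
      = ENNReal.ofReal ((∫⁻ z in Set.Ioc (0:ℝ) 1, ENNReal.ofReal (z ^ β) ∂lam).toReal) :=
    (ENNReal.ofReal_toReal hsmall).symm
  have hL : lam (Set.Ioi (1:ℝ)) = ENNReal.ofReal ((lam (Set.Ioi (1:ℝ))).toReal) :=
    (ENNReal.ofReal_toReal hfin1).symm
  rw [hC, hL]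
  have hpos : (0:ℝ) ≤ r ^ (-β) := (Real.rpow_pos_of_pos hr0 _).le
  rw [← ENNReal.ofReal_mul hpos, ← ENNReal.ofReal_mul hpos]
  have e1 : ENNReal.ofReal (r ^ (-β) * (lam (Set.Ioi (1:ℝ))).toReal)
        + ENNReal.ofReal (β * r ^ (-β) * ∫ u in (1:ℝ)..R, l u / u)
      = ENNReal.ofReal (r ^ (-β) * (lam (Set.Ioi (1:ℝ))).toReal
        + β * r ^ (-β) * ∫ u in (1:ℝ)..R, l u / u) :=
    (ENNReal.ofReal_add (by positivity) (mul_nonneg (by positivity) hJRnn)).symm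
  rw [e1]
  have e2nn : (0:ℝ) ≤ r ^ (-β) * (lam (Set.Ioi (1:ℝ))).toReal
      + β * r ^ (-β) * ∫ u in (1:ℝ)..R, l u / u := by
    have := mul_nonneg (mul_nonneg hβ.le hpos) hJRnn
    have := mul_nonneg hpos (ENNReal.toReal_nonneg (a := lam (Set.Ioi (1:ℝ))))
    linarith
  rw [← ENNReal.ofReal_add (by positivity) e2nn]
  congr 1
  rw [ENNReal.toReal_ofReal ENNReal.toReal_nonneg, ENNReal.toReal_ofReal ENNReal.toReal_nonneg]
  ring


theorem stmt4 (d : ℕ) (hd : 1 ≤ d) (α : ℝ) (hα : α ∈ Set.Ioo (0:ℝ) 2) (t : ℝ) (ht : 0 < t)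
    (lam : MeasureTheory.Measure ℝ) [SigmaFinite lam]
    (hlam0 : lam (Set.Iic 0) = 0) (hlam_ne : lam ≠ 0)
    (hmom : ∫⁻ z in Set.Ioi (0:ℝ), ENNReal.ofReal (min 1 (z ^ 2)) ∂lam ≠ ⊤)
    (hsmall : ∫⁻ z in Set.Ioc (0:ℝ) 1, ENNReal.ofReal (z ^ (α / (d:ℝ))) ∂lam ≠ ⊤)
    (l : ℝ → ℝ) (hl : SlowlyVarying l) (hl_pos : ∀ x : ℝ, 0 < x → 0 < l x)
    (hlaml : ∀ r : ℝ, 1 ≤ r → (lam (Set.Ioi r)).toReal = l r / r ^ (α / (d:ℝ))) :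
    Filter.Tendsto
      (fun r : ℝ => (tauBar d α t lam r).toReal /
        (r ^ (-(α / (d:ℝ))) *
          ((∫⁻ z in Set.Ioc (0:ℝ) 1, ENNReal.ofReal (z ^ (α / (d:ℝ))) ∂lam).toReal
            + (lam (Set.Ioi (1:ℝ))).toReal
            + α / (d:ℝ) * ∫ u in (1:ℝ)..r, l u / u)))
      Filter.atTop (nhds 1) ∧
    (MeasureTheory.IntegrableOn (fun u => l u / u) (Set.Ioi (1:ℝ)) MeasureTheory.volume →
      Filter.Tendsto
        (fun r : ℝ => (tauBar d α t lam r).toReal /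
          (r ^ (-(α / (d:ℝ))) *
            ((∫⁻ z in Set.Ioc (0:ℝ) 1, ENNReal.ofReal (z ^ (α / (d:ℝ))) ∂lam).toReal
              + (lam (Set.Ioi (1:ℝ))).toReal
              + α / (d:ℝ) * ∫ u in Set.Ioi (1:ℝ), l u / u)))
        Filter.atTop (nhds 1)) ∧
    (¬ MeasureTheory.IntegrableOn (fun u => l u / u) (Set.Ioi (1:ℝ)) MeasureTheory.volume →
      Filter.Tendsto
        (fun r : ℝ => (tauBar d α t lam r).toReal /
          (α / (d:ℝ) * r ^ (-(α / (d:ℝ))) * ∫ u in (1:ℝ)..r, l u / u))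
        Filter.atTop (nhds 1)) := by
  have hd0 : (0:ℝ) < d := by exact_mod_cast Nat.lt_of_lt_of_le Nat.zero_lt_one hd
  obtain ⟨hα0, hα2⟩ := hα
  set β : ℝ := α / (d:ℝ) with hβdef
  have hβ : 0 < β := div_pos hα0 hd0
  set c : ℝ := t ^ β⁻¹ with hcdef
  have hc0 : 0 < c := Real.rpow_pos_of_pos ht _
  set C : ℝ := (∫⁻ z in Set.Ioc (0:ℝ) 1, ENNReal.ofReal (z ^ β) ∂lam).toReal with hCdef
  set L1 : ℝ := (lam (Set.Ioi (1:ℝ))).toReal with hL1def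
  have hfin1 : lam (Set.Ioi (1:ℝ)) ≠ ⊤ := lam_Ioi_ne_top lam hmom
  have hL1pos : 0 < L1 := by
    rw [hL1def, hlaml 1 le_rfl, Real.one_rpow, div_one]
    exact hl_pos 1 one_pos
  have hC0 : 0 ≤ C := ENNReal.toReal_nonneg
  set K : ℝ := C + L1 with hKdef
  have hK0 : 0 < K := by rw [hKdef]; linarith
  set J : ℝ → ℝ := fun x => ∫ u in (1:ℝ)..x, l u / u with hJdef
  set g : ℝ → ℝ := fun u => l u / u with hgdef
  -- basic facts about g and J
  have hg0 : ∀ u : ℝ, 1 ≤ u → 0 ≤ g u := fun u hu =>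
    div_nonneg (hl_pos u (by linarith)).le (by linarith)
  have hanti : Antitone (fun u : ℝ => lam (Set.Ioi u)) :=
    fun a b hab => measure_mono (Set.Ioi_subset_Ioi hab)
  have htail_meas : Measurable (fun u : ℝ => lam (Set.Ioi u)) := hanti.measurable
  have hgeq : ∀ u : ℝ, 1 ≤ u → g u = (lam (Set.Ioi u)).toReal * u ^ (β - 1) := by
    intro u hu
    have hu0 : (0:ℝ) < u := lt_of_lt_of_le one_pos hu
    have huβ : (0:ℝ) < u ^ β := Real.rpow_pos_of_pos hu0 _
    have hpow : u ^ (β - 1) = u ^ β / u := by rw [Real.rpow_sub hu0, Real.rpow_one]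
    rw [hgdef, hlaml u hu, hpow]
    field_simp
  have hIoc : ∀ a b : ℝ, 1 ≤ a → MeasureTheory.IntegrableOn g (Set.Ioc a b) volume := by
    intro a b ha
    rcases le_total b a with hba | hab
    · rw [Set.Ioc_eq_empty (by exact not_lt.2 hba)]
      exact integrableOn_empty
    · set H : ℝ → ℝ := fun u => (lam (Set.Ioi u)).toReal * u ^ (β - 1) with hHdef
      have hHm : Measurable H :=
        htail_meas.ennreal_toReal.mul (measurable_id.pow measurable_const)
      have hHint : MeasureTheory.IntegrableOn H (Set.Ioc a b) volume := by
        refine Measure.integrableOn_of_bounded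
          (M := (lam (Set.Ioi (1:ℝ))).toReal * max 1 (b ^ (β - 1))) ?_
          hHm.aestronglyMeasurable ?_
        · rw [Real.volume_Ioc]; exact ENNReal.ofReal_ne_top
        · refine ae_restrict_of_forall_mem measurableSet_Ioc (fun u hu => ?_)
          have hu1 : (1:ℝ) ≤ u := le_trans ha hu.1.le
          have hu0 : (0:ℝ) < u := lt_of_lt_of_le one_pos hu1
          have htR : (lam (Set.Ioi u)).toReal ≤ (lam (Set.Ioi (1:ℝ))).toReal :=
            ENNReal.toReal_mono hfin1 (measure_mono (Set.Ioi_subset_Ioi hu1))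
          have hpw : u ^ (β - 1) ≤ max 1 (b ^ (β - 1)) := by
            rcases le_total (β - 1) 0 with hb | hb
            · exact le_trans (Real.rpow_le_one_of_one_le_of_nonpos hu1 hb) (le_max_left _ _)
            · exact le_trans (Real.rpow_le_rpow hu0.le hu.2 hb) (le_max_right _ _)
          have h0b : 0 ≤ u ^ (β - 1) := (Real.rpow_pos_of_pos hu0 _).le
          rw [hHdef, Real.norm_eq_abs, abs_of_nonneg (by positivity)]
          exact mul_le_mul htR hpw h0b ENNReal.toReal_nonneg
      refine hHint.congr_fun (fun u hu => ?_) measurableSet_Ioc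
      exact (hgeq u (le_trans ha hu.1.le)).symm
  have hgi : ∀ a b : ℝ, 1 ≤ a → a ≤ b → IntervalIntegrable g volume a b :=
    fun a b ha hab => (intervalIntegrable_iff_integrableOn_Ioc_of_le hab).2 (hIoc a b ha)
  have hJnn : ∀ x : ℝ, 1 ≤ x → 0 ≤ J x := fun x hx =>
    intervalIntegral.integral_nonneg hx (fun u hu => hg0 u hu.1)
  have hJmono : ∀ x y : ℝ, 1 ≤ x → x ≤ y → J x ≤ J y := by
    intro x y hx hxy
    have h1 : J x + ∫ u in x..y, g u = J y :=
      intervalIntegral.integral_add_adjacent_intervals (hgi 1 x le_rfl hx) (hgi x y hx hxy)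
    have h2 : 0 ≤ ∫ u in x..y, g u :=
      intervalIntegral.integral_nonneg hxy (fun u hu => hg0 u (le_trans hx hu.1))
    linarith
  -- slowly varying bound on g
  have hsvgen : ∀ c₀ : ℝ, 0 < c₀ → ∀ ε : ℝ, 0 < ε →
      ∀ᶠ u in Filter.atTop, g (c₀ * u) ≤ (1 + ε) / c₀ * g u := by
    intro c₀ hc₀ ε hε
    filter_upwards [(hl c₀ hc₀).eventually (eventually_le_nhds (by linarith : (1:ℝ) < 1 + ε)),
      Filter.eventually_gt_atTop (0:ℝ)] with u hu hu0
    have hlu : 0 < l u := hl_pos u hu0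
    have h2 : l (c₀ * u) ≤ (1 + ε) * l u := by
      rw [div_le_iff₀ hlu] at hu
      linarith
    rw [hgdef]
    have h3 : (0:ℝ) < c₀ * u := by positivity
    rw [div_le_iff₀ h3]
    have heq : (1 + ε) / c₀ * (l u / u) * (c₀ * u) = (1 + ε) * l u := by
      field_simp
    rw [heq]
    exact h2
  -- divergence of J in the non-integrable case
  have hJtop : ¬ MeasureTheory.IntegrableOn g (Set.Ioi (1:ℝ)) volume →
      Filter.Tendsto J Filter.atTop Filter.atTop := by
    intro hni
    have key : ∀ N : ℝ, ∃ x₀ : ℝ, 1 ≤ x₀ ∧ N < J x₀ := by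
      intro N
      by_contra hcon
      push_neg at hcon
      apply hni
      refine integrableOn_Ioi_of_intervalIntegral_norm_bounded N 1
        (fun i : ℝ => hIoc 1 i le_rfl) tendsto_id ?_
      filter_upwards [Filter.eventually_ge_atTop (1:ℝ)] with i hi
      have heq : ∫ u in (1:ℝ)..i, ‖g u‖ = J i := by
        refine intervalIntegral.integral_congr (fun u hu => ?_)
        rw [Set.uIcc_of_le hi] at hu
        exact Real.norm_of_nonneg (hg0 u hu.1)
      rw [heq]
      exact hcon i hi
    refine Filter.tendsto_atTop.2 (fun N => ?_)
    obtain ⟨x₀, hx₀1, hx₀⟩ := key N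
    filter_upwards [Filter.eventually_ge_atTop x₀] with x hx
    exact le_of_lt (lt_of_lt_of_le hx₀ (hJmono x₀ x hx₀1 hx))
  -- ratio of J's along multiplication by c, in the divergent case
  have hQdiv : ¬ MeasureTheory.IntegrableOn g (Set.Ioi (1:ℝ)) volume →
      Filter.Tendsto (fun r => J (r * c) / J r) Filter.atTop (nhds 1) := by
    intro hni
    have hJt := hJtop hni
    rcases le_or_gt 1 c with hc1 | hc1
    · have h := div_ratio g hg0 hgi hJt c hc1 (hsvgen c hc0)
      refine h.congr (fun r => ?_)
      rw [mul_comm c r]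
    · set c' : ℝ := c⁻¹ with hc'def
      have hc'1 : 1 ≤ c' := ((one_lt_inv₀ hc0).2 hc1).le
      have h := div_ratio g hg0 hgi hJt c' hc'1 (hsvgen c' (by positivity))
      have hcomp : Filter.Tendsto (fun r : ℝ => c * r) Filter.atTop Filter.atTop :=
        Filter.Tendsto.const_mul_atTop hc0 Filter.tendsto_id
      have h2 := h.comp hcomp
      have h3 : Filter.Tendsto (fun r : ℝ => J r / J (c * r)) Filter.atTop (nhds 1) := by
        refine h2.congr (fun r => ?_)
        simp only [Function.comp]
        congr 2
        rw [hc'def, ← mul_assoc, inv_mul_cancel₀ hc0.ne', one_mul]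
      have h4 := h3.inv₀ one_ne_zero
      rw [inv_one] at h4
      refine h4.congr (fun r => ?_)
      rw [inv_div, mul_comm c r]
  -- asymptotic formula, eventually in r
  have hev0 : ∀ᶠ r : ℝ in Filter.atTop, r ^ (-β) ≤ t :=
    (tendsto_rpow_neg_atTop hβ).eventually (eventually_le_nhds ht)
  have hrc1 : ∀ r : ℝ, c⁻¹ ≤ r → 1 ≤ r * c := by
    intro r hr
    calc (1:ℝ) = c⁻¹ * c := (inv_mul_cancel₀ hc0.ne').symm
      _ ≤ r * c := mul_le_mul_of_nonneg_right hr hc0.le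
  have hfe : ∀ᶠ r : ℝ in Filter.atTop,
      (tauBar d α t lam r).toReal = r ^ (-β) * (K + β * J (r * c)) := by
    filter_upwards [hev0, Filter.eventually_ge_atTop (1:ℝ),
      Filter.eventually_ge_atTop c⁻¹] with r h1 h2 h3
    rw [tauBar_formula d hd α ⟨hα0, hα2⟩ t ht lam hmom hsmall l hl_pos hlaml r h2 h1]
    have hJ1 : (0:ℝ) ≤ ∫ u in (1:ℝ)..(r * t ^ (α / (d:ℝ))⁻¹), l u / u :=
      hJnn _ (hrc1 r h3)
    have hr0 : (0:ℝ) < r := lt_of_lt_of_le one_pos h2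
    have hnn : (0:ℝ) ≤ r ^ (-(α / (d:ℝ))) *
        ((∫⁻ z in Set.Ioc (0:ℝ) 1, ENNReal.ofReal (z ^ (α / (d:ℝ))) ∂lam).toReal
          + (lam (Set.Ioi (1:ℝ))).toReal
          + α / (d:ℝ) * ∫ u in (1:ℝ)..(r * t ^ (α / (d:ℝ))⁻¹), l u / u) := by
      refine mul_nonneg (Real.rpow_pos_of_pos hr0 _).le ?_
      have h4 : (0:ℝ) ≤ α / (d:ℝ) * ∫ u in (1:ℝ)..(r * t ^ (α / (d:ℝ))⁻¹), l u / u :=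
        mul_nonneg hβ.le hJ1
      have h5 : (0:ℝ) ≤ (∫⁻ z in Set.Ioc (0:ℝ) 1,
          ENNReal.ofReal (z ^ (α / (d:ℝ))) ∂lam).toReal := ENNReal.toReal_nonneg
      have h6 : (0:ℝ) ≤ (lam (Set.Ioi (1:ℝ))).toReal := ENNReal.toReal_nonneg
      linarith
    rw [ENNReal.toReal_ofReal hnn]
  have hrpow_pos : ∀ r : ℝ, 1 ≤ r → (0:ℝ) < r ^ (-β) :=
    fun r hr => Real.rpow_pos_of_pos (lt_of_lt_of_le one_pos hr) _
  -- Part 1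
  have hpart1 : Filter.Tendsto (fun r : ℝ => (tauBar d α t lam r).toReal /
      (r ^ (-β) * (K + β * J r))) Filter.atTop (nhds 1) := by
    have hQ : Filter.Tendsto (fun r : ℝ => (K + β * J (r * c)) / (K + β * J r))
        Filter.atTop (nhds 1) := by
      by_cases hInt : MeasureTheory.IntegrableOn g (Set.Ioi (1:ℝ)) volume
      · have hJlim : Filter.Tendsto J Filter.atTop (nhds (∫ u in Set.Ioi (1:ℝ), g u)) :=
          MeasureTheory.intervalIntegral_tendsto_integral_Ioi 1 hInt Filter.tendsto_id
        have hJclim : Filter.Tendsto (fun r : ℝ => J (r * c)) Filter.atTop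
            (nhds (∫ u in Set.Ioi (1:ℝ), g u)) :=
          hJlim.comp (Filter.Tendsto.atTop_mul_const hc0 Filter.tendsto_id)
        set A : ℝ := ∫ u in Set.Ioi (1:ℝ), g u with hAdef
        have hA0 : 0 ≤ A :=
          MeasureTheory.setIntegral_nonneg measurableSet_Ioi (fun u hu => hg0 u (le_of_lt hu))
        have hden : (0:ℝ) < K + β * A := by nlinarith
        have h1 := ((tendsto_const_nhds (x := K)).add (hJclim.const_mul β)).div
          ((tendsto_const_nhds (x := K)).add (hJlim.const_mul β)) hden.ne'
        rw [div_self hden.ne'] at h1; exact h1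
      · have hJt := hJtop hInt
        have hr1 := hQdiv hInt
        have hK0' : Filter.Tendsto (fun r : ℝ => K / J r) Filter.atTop (nhds 0) :=
          Filter.Tendsto.div_atTop tendsto_const_nhds hJt
        have hnum := (hK0'.add (hr1.const_mul β)).div
          (hK0'.add (tendsto_const_nhds (x := β))) (by simpa using hβ.ne')
        have hnum1 : Filter.Tendsto
            (fun r : ℝ => (K / J r + β * (J (r * c) / J r)) / (K / J r + β))
            Filter.atTop (nhds 1) := by
          rw [show (0 + β * 1) / (0 + β) = 1 by simp [hβ.ne']] at hnum; exact hnum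
        refine hnum1.congr' ?_
        filter_upwards [hJt.eventually_gt_atTop 0] with r hJr
        have hKJ : (0:ℝ) < K + β * J r := by nlinarith
        field_simp
    refine hQ.congr' ?_
    filter_upwards [hfe, Filter.eventually_ge_atTop (1:ℝ)] with r h1 h2
    rw [h1]
    exact (mul_div_mul_left _ _ (hrpow_pos r h2).ne').symm
  refine ⟨hpart1, ?_, ?_⟩
  · -- Part 2 : integrable case
    intro hInt
    have hJlim : Filter.Tendsto J Filter.atTop (nhds (∫ u in Set.Ioi (1:ℝ), g u)) :=
      MeasureTheory.intervalIntegral_tendsto_integral_Ioi 1 hInt Filter.tendsto_id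
    have hJclim : Filter.Tendsto (fun r : ℝ => J (r * c)) Filter.atTop
        (nhds (∫ u in Set.Ioi (1:ℝ), g u)) :=
      hJlim.comp (Filter.Tendsto.atTop_mul_const hc0 Filter.tendsto_id)
    set A : ℝ := ∫ u in Set.Ioi (1:ℝ), g u with hAdef
    have hA0 : 0 ≤ A :=
      MeasureTheory.setIntegral_nonneg measurableSet_Ioi (fun u hu => hg0 u (le_of_lt hu))
    have hden : (0:ℝ) < K + β * A := by nlinarith
    have h1 := ((tendsto_const_nhds (x := K)).add (hJclim.const_mul β)).div
      (tendsto_const_nhds (x := K + β * A)) hden.ne'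
    have hQ2 : Filter.Tendsto (fun r : ℝ => (K + β * J (r * c)) / (K + β * A))
        Filter.atTop (nhds 1) := by
      rw [div_self hden.ne'] at h1; exact h1
    refine hQ2.congr' ?_
    filter_upwards [hfe, Filter.eventually_ge_atTop (1:ℝ)] with r h1 h2
    rw [h1]
    exact (mul_div_mul_left _ _ (hrpow_pos r h2).ne').symm
  · -- Part 3 : divergent case
    intro hInt
    have hJt := hJtop hInt
    have hr1 := hQdiv hInt
    have hK0' : Filter.Tendsto (fun r : ℝ => K / J r) Filter.atTop (nhds 0) :=
      Filter.Tendsto.div_atTop tendsto_const_nhds hJt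
    have hnum := (hK0'.add (hr1.const_mul β)).div_const β
    have hnum1 : Filter.Tendsto
        (fun r : ℝ => (K / J r + β * (J (r * c) / J r)) / β)
        Filter.atTop (nhds 1) := by
      simpa [hβ.ne'] using hnum
    refine hnum1.congr' ?_
    filter_upwards [hfe, Filter.eventually_ge_atTop (1:ℝ), hJt.eventually_gt_atTop 0]
      with r h1 h2 hJr
    rw [h1]
    have hrp : (0:ℝ) < r ^ (-β) := hrpow_pos r h2
    field_simp
    rw [show intervalIntegral g 1 r volume = J r from rfl]; field_simp
end
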